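/- arXiv:2102.10517 — 4 statements merged into one kernel-verified Lean document; each statement's English description precedes it below -/
import Mathlib

section
/- For every prime p, every integer m ≥ 1, every positive integer q, every permutation π of {1,…,m}, all coefficients c_1,…,c_m ∈ Z_λ and constant c ∈ Z_λ (where λ = lcm(p,q)), the family of codes {C_t^p : t = 0,1,…,p−1} forms a (p,p,p^m)-CCC; explicitly, for all t,t' ∈ {0,…,p−1} and all integers u with |u| < p^m: C(C_t^p, C_{t'}^p)(u) = p^{m+1} if u = 0 and t = t'; C(C_t^p, C_{t'}^p)(u) = 0 if 0 < |u| < p^m and t = t'; and C(C_t^p, C_{t'}^p)(u) = 0 for all |u| < p^m if t ≠ t'. -/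
open Finset

/-- `ω_λ = exp(2π√(-1)/λ)`. -/
noncomputable def omg (lam : ℕ) : ℂ := Complex.exp (2 * Real.pi * Complex.I / lam)

/-- Aperiodic cross-correlation of two length-`L` complex sequences at shift `u`. -/
noncomputable def aCorr (L : ℕ) (a b : ℕ → ℂ) (u : ℤ) : ℂ :=
  if 0 ≤ u then
    ∑ i ∈ Finset.range (L - u.toNat), a (i + u.toNat) * (starRingEnd ℂ) (b i)
  else
    ∑ i ∈ Finset.range (L - (-u).toNat), a i * (starRingEnd ℂ) (b (i + (-u).toNat))

/-- Cross-correlation sum of two `M × L` codes (matrices given row-wise). -/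
noncomputable def codeCorr (M L : ℕ) (C D : ℕ → ℕ → ℂ) (u : ℤ) : ℂ :=
  ∑ ν ∈ Finset.range M, aCorr L (C ν) (D ν) u

/-- Base-`p` digit vector of `γ` (digit `j` is `γ / p^j % p`). -/
def dig (p m γ : ℕ) : Fin m → ℕ := fun j => γ / p ^ (j : ℕ) % p

/-- The quadratic multivariable function
`f(v) = (λ/p)·Σ_{β=1}^{m-1} v_{π(β)} v_{π(β+1)} + Σ_{β=1}^{m} c_β v_β` (as an integer). -/
def fQuad (p m lam : ℕ) (π : Equiv.Perm (Fin m)) (cf : Fin m → ZMod lam)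
    (v : Fin m → ℕ) : ℤ :=
  ((lam / p : ℕ) : ℤ) * ∑ β : Fin (m - 1),
      (v (π (Fin.castLE (Nat.sub_le m 1) β)) : ℤ) *
        (v (π ⟨(β : ℕ) + 1, by have := β.isLt; omega⟩) : ℤ)
    + ∑ β : Fin m, ((cf β).val : ℤ) * (v β : ℤ)

/-- `a_t^α(v) = f(v) + (λ/p)·α·v_{π(1)} + (λ/p)·t·v_{π(m)} + c` (as an integer). -/
def aFun (p m lam : ℕ) (hm : 0 < m) (π : Equiv.Perm (Fin m)) (cf : Fin m → ZMod lam)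
    (c : ZMod lam) (t α : ℕ) (v : Fin m → ℕ) : ℤ :=
  fQuad p m lam π cf v
    + ((lam / p : ℕ) : ℤ) * (α : ℤ) * (v (π ⟨0, hm⟩) : ℤ)
    + ((lam / p : ℕ) : ℤ) * (t : ℤ) * (v (π ⟨m - 1, by omega⟩) : ℤ)
    + ((c.val : ℕ) : ℤ)

/-- The code `C_t^p`: the `p × p^m` matrix whose `α`-th row is `ψ(a_t^α)`. -/
noncomputable def codeC (p m lam : ℕ) (hm : 0 < m) (π : Equiv.Perm (Fin m))
    (cf : Fin m → ZMod lam) (c : ZMod lam) (t : ℕ) : ℕ → ℕ → ℂ :=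
  fun α γ => omg lam ^ (aFun p m lam hm π cf c t α (dig p m γ))


namespace CCCaux


/-- replace the base-`p` digit at position `k` of `n` by `d` -/
def setdig (p k d n : ℕ) : ℕ := n % p ^ k + d * p ^ k + n / p ^ (k+1) * p ^ (k+1)

lemma digit_decomp (p : ℕ) (k n : ℕ) :
    n % p ^ k + (n / p ^ k % p) * p ^ k + n / p ^ (k+1) * p ^ (k+1) = n := by
  have h1 : p ^ k * (n / p ^ k) + n % p ^ k = n := Nat.div_add_mod n (p ^ k)
  have h2 : p * (n / p ^ k / p) + n / p ^ k % p = n / p ^ k := Nat.div_add_mod _ p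
  have h3 : n / p ^ k / p = n / p ^ (k+1) := by
    rw [Nat.div_div_eq_div_mul, pow_succ]
  rw [h3] at h2
  calc n % p ^ k + (n / p ^ k % p) * p ^ k + n / p ^ (k+1) * p ^ (k+1)
      = p ^ k * (p * (n / p ^ (k+1)) + n / p ^ k % p) + n % p ^ k := by ring
    _ = n := by rw [h2, h1]

lemma setdig_self (p : ℕ) (k n : ℕ) : setdig p k (n / p ^ k % p) n = n :=
  digit_decomp p k n

lemma setdig_div_pow_succ (p : ℕ) (hp : 0 < p) {d : ℕ} (hd : d < p) (k n : ℕ) :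
    setdig p k d n / p ^ (k+1) = n / p ^ (k+1) := by
  have hpk : 0 < p ^ (k+1) := Nat.pow_pos hp
  have hlt : n % p ^ k + d * p ^ k < p ^ (k+1) := by
    have h1 : n % p ^ k < p ^ k := Nat.mod_lt _ (Nat.pow_pos hp)
    have h2 : (d + 1) * p ^ k ≤ p * p ^ k := Nat.mul_le_mul_right _ (by omega)
    have e1 : (d + 1) * p ^ k = d * p ^ k + p ^ k := by ring
    have e2 : p * p ^ k = p ^ (k + 1) := by rw [pow_succ]; ring
    omega
  unfold setdig
  rw [Nat.add_mul_div_right _ _ hpk, Nat.div_eq_of_lt hlt, zero_add]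

lemma setdig_dig_eq (p : ℕ) (hp : 0 < p) {d : ℕ} (hd : d < p) (k n : ℕ) :
    setdig p k d n / p ^ k % p = d := by
  have hpk : 0 < p ^ k := Nat.pow_pos hp
  have : setdig p k d n = n % p ^ k + (d + n / p ^ (k+1) * p) * p ^ k := by
    unfold setdig; ring
  rw [this, Nat.add_mul_div_right _ _ hpk,
    Nat.div_eq_of_lt (Nat.mod_lt _ hpk), zero_add, Nat.add_mul_mod_self_right,
    Nat.mod_eq_of_lt hd]

lemma setdig_mod_pow (p : ℕ) (k n d j : ℕ) (hj : j ≤ k) :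
    setdig p k d n % p ^ j = n % p ^ j := by
  have h1 : p ^ j ∣ p ^ k := pow_dvd_pow _ hj
  obtain ⟨a, ha⟩ := pow_dvd_pow p (show j ≤ k by omega)
  obtain ⟨b, hb⟩ := pow_dvd_pow p (show j ≤ k + 1 by omega)
  unfold setdig
  rw [ha, hb]
  rw [show n % (p^j*a) + d * (p^j*a) + n / (p^j*b) * (p^j*b)
      = n % (p^j*a) + (d * a + n / (p^j*b) * b) * p ^ j by ring,
    Nat.add_mul_mod_self_right, ← ha]
  exact Nat.mod_mod_of_dvd n h1

/-- the digit of `n` at `j` only depends on `n % p^(j+1)` -/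
lemma dig_eq_mod_div (p : ℕ) (hp : 0 < p) (j n : ℕ) :
    n / p ^ j % p = n % p ^ (j+1) / p ^ j := by
  have hpk : 0 < p ^ j := Nat.pow_pos hp
  conv_lhs => rw [← Nat.div_add_mod n (p ^ (j+1))]
  rw [pow_succ]
  rw [show p ^ j * p * (n / (p ^ j * p)) + n % (p ^ j * p)
      = n % (p ^ j * p) + (p * (n / (p ^ j * p))) * p ^ j by ring,
    Nat.add_mul_div_right _ _ hpk, Nat.add_mul_mod_self_left]
  have : n % (p ^ j * p) / p ^ j < p := by
    rw [Nat.div_lt_iff_lt_mul hpk, mul_comm]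
    exact Nat.mod_lt _ (by positivity)
  exact Nat.mod_eq_of_lt this

lemma setdig_dig_ne (p : ℕ) (hp : 0 < p) {d : ℕ} (hd : d < p) (k n j : ℕ) (hjk : j ≠ k) :
    setdig p k d n / p ^ j % p = n / p ^ j % p := by
  rcases lt_or_gt_of_ne hjk with h | h
  · rw [dig_eq_mod_div p hp, dig_eq_mod_div p hp,
      setdig_mod_pow p k n d (j+1) (by omega)]
  · -- j > k
    have h1 : setdig p k d n / p ^ j = setdig p k d n / p ^ (k+1) / p ^ (j - (k+1)) := by
      rw [Nat.div_div_eq_div_mul, ← pow_add]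
      congr 2; omega
    have h2 : n / p ^ j = n / p ^ (k+1) / p ^ (j - (k+1)) := by
      rw [Nat.div_div_eq_div_mul, ← pow_add]
      congr 2; omega
    rw [h1, h2, setdig_div_pow_succ p hp hd]

lemma setdig_lt (p : ℕ) (hp : 0 < p) {m k d n : ℕ} (hk : k < m) (hd : d < p)
    (hn : n < p ^ m) : setdig p k d n < p ^ m := by
  have h1 : setdig p k d n % p ^ (k+1) < p ^ (k+1) :=
    Nat.mod_lt _ (by positivity)
  have h2 : setdig p k d n / p ^ (k+1) = n / p ^ (k+1) := setdig_div_pow_succ p hp hd k n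
  have h3 : n / p ^ (k+1) ≤ (p ^ m - 1) / p ^ (k+1) := Nat.div_le_div_right (by omega)
  have h4 : p ^ m = p ^ (k+1) * p ^ (m - (k+1)) := by rw [← pow_add]; congr 1; omega
  have h5 : setdig p k d n = p ^ (k+1) * (n / p ^ (k+1)) + setdig p k d n % p ^ (k+1) := by
    conv_lhs => rw [← Nat.div_add_mod (setdig p k d n) (p ^ (k+1))]
    rw [h2]
  have h6 : n / p ^ (k+1) < p ^ (m - (k+1)) := by
    rw [Nat.div_lt_iff_lt_mul (by positivity : 0 < p ^ (k+1))]
    calc n < p ^ m := hn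
    _ = p ^ (m - (k+1)) * p ^ (k+1) := by rw [← pow_add]; congr 1; omega
  calc setdig p k d n = p ^ (k+1) * (n / p ^ (k+1)) + setdig p k d n % p ^ (k+1) := h5
    _ < p ^ (k+1) * (n / p ^ (k+1)) + p ^ (k+1) := by omega
    _ = p ^ (k+1) * (n / p ^ (k+1) + 1) := by ring
    _ ≤ p ^ (k+1) * p ^ (m - (k+1)) := Nat.mul_le_mul_left _ (by omega)
    _ = p ^ m := h4.symm

lemma setdig_setdig (p : ℕ) (hp : 0 < p) {d d' : ℕ} (hd' : d' < p) (k n : ℕ) :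
    setdig p k d (setdig p k d' n) = setdig p k d n := by
  conv_lhs => rw [setdig, setdig_mod_pow p k n d' k le_rfl, setdig_div_pow_succ p hp hd']
  rfl

lemma setdig_add (p : ℕ) (k d n u : ℕ)
    (h : (n + u) / p ^ k % p = n / p ^ k % p) :
    setdig p k d n + u = setdig p k d (n + u) := by
  have e1 := digit_decomp p k n
  have e2 := digit_decomp p k (n + u)
  rw [h] at e2
  unfold setdig
  omega





lemma omg_ne_zero (lam : ℕ) : omg lam ≠ 0 := Complex.exp_ne_zero _

lemma omg_zpow_eq_one_iff (lam : ℕ) (hl : 0 < lam) (n : ℤ) :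
    omg lam ^ n = 1 ↔ (lam : ℤ) ∣ n := by
  have hexp : omg lam ^ n = Complex.exp (n * (2 * Real.pi * Complex.I / lam)) := by
    rw [Complex.exp_int_mul]; rfl
  rw [hexp, Complex.exp_eq_one_iff]
  have hl0 : (lam : ℂ) ≠ 0 := by exact_mod_cast hl.ne'
  have h2 : (2 * (Real.pi : ℂ) * Complex.I) ≠ 0 := Complex.two_pi_I_ne_zero
  constructor
  · rintro ⟨k, hk⟩
    refine ⟨k, ?_⟩
    have : (n : ℂ) = lam * k := by
      field_simp at hk
      have := mul_right_cancel₀ h2 (by linear_combination (2 * (Real.pi:ℂ) * Complex.I) * hk :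
        (n : ℂ) * (2 * (Real.pi:ℂ) * Complex.I) = ((lam : ℂ) * k) * (2 * (Real.pi:ℂ) * Complex.I))
      exact this
    exact_mod_cast this
  · rintro ⟨k, rfl⟩
    refine ⟨k, ?_⟩
    field_simp
    ring
    norm_cast

lemma omg_conj (lam : ℕ) : (starRingEnd ℂ) (omg lam) = (omg lam)⁻¹ := by
  rw [omg, ← Complex.exp_conj, ← Complex.exp_neg]
  congr 1
  simp only [map_div₀, map_mul, Complex.conj_I, Complex.conj_natCast, Complex.conj_ofReal,
    map_ofNat]
  ring

lemma omg_zpow_conj (lam : ℕ) (n : ℤ) :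
    (starRingEnd ℂ) (omg lam ^ n) = omg lam ^ (-n) := by
  rw [map_zpow₀, omg_conj, inv_zpow, ← zpow_neg]

lemma geom_zero (p lam : ℕ) (hp : 0 < p) (hpl : p ∣ lam) (hl : 0 < lam) (a D : ℤ)
    (hD : ¬ ((p : ℤ) ∣ D)) :
    ∑ d ∈ range p, omg lam ^ (a + ((lam / p : ℕ) : ℤ) * D * d) = 0 := by
  have hω := omg_ne_zero lam
  have lameq : (lam : ℤ) = ((lam / p : ℕ) : ℤ) * p := by
    exact_mod_cast (Nat.div_mul_cancel hpl).symm
  have hq0 : ((lam / p : ℕ) : ℤ) ≠ 0 := by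
    have := Nat.div_pos (Nat.le_of_dvd hl hpl) hp
    exact_mod_cast this.ne'
  set ζ := omg lam ^ (((lam / p : ℕ) : ℤ) * D) with hζ
  have hsum : ∀ d ∈ range p, omg lam ^ (a + ((lam / p : ℕ) : ℤ) * D * d)
      = omg lam ^ a * ζ ^ d := by
    intro d _
    rw [zpow_add₀ hω, hζ, ← zpow_natCast (omg lam ^ _), ← zpow_mul]
  rw [Finset.sum_congr rfl hsum, ← Finset.mul_sum]
  have hζ1 : ζ ≠ 1 := by
    intro h1
    rw [hζ, omg_zpow_eq_one_iff lam hl] at h1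
    obtain ⟨z, hz⟩ := h1
    refine hD ⟨z, mul_left_cancel₀ hq0 ?_⟩
    rw [hz, lameq]; ring
  have hζp : ζ ^ p = 1 := by
    rw [hζ, ← zpow_natCast, ← zpow_mul, omg_zpow_eq_one_iff lam hl]
    exact ⟨D, by linear_combination (-D) * lameq⟩
  rw [geom_sum_eq hζ1, hζp, sub_self, zero_div, mul_zero]



lemma cancel (p lam : ℕ) (hp : 0 < p) (hpl : p ∣ lam) (hl : 0 < lam)
    (S : Finset ℕ) (E Δ : ℕ → ℤ) (K : ℕ → ℕ)
    (hmem : ∀ i ∈ S, ∀ d < p, setdig p (K i) d i ∈ S)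
    (hKinv : ∀ i ∈ S, ∀ d < p, K (setdig p (K i) d i) = K i)
    (hE : ∀ i ∈ S, ∀ d < p, E (setdig p (K i) d i)
        = E i + ((lam / p : ℕ) : ℤ) * (((d : ℤ) - ((i / p ^ (K i) % p : ℕ) : ℤ)) * Δ i))
    (hΔ : ∀ i ∈ S, ¬ ((p : ℤ) ∣ Δ i)) :
    ∑ i ∈ S, omg lam ^ E i = 0 := by
  have hdig : ∀ i : ℕ, i / p ^ (K i) % p < p := fun i => Nat.mod_lt _ hp
  have hdouble : ∑ x ∈ S ×ˢ range p, omg lam ^ E (setdig p (K x.1) x.2 x.1)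
      = (p : ℂ) * ∑ i ∈ S, omg lam ^ E i := by
    have := Finset.sum_nbij'
      (i := fun x : ℕ × ℕ => ((setdig p (K x.1) x.2 x.1, x.1 / p ^ (K x.1) % p) : ℕ × ℕ))
      (j := fun y : ℕ × ℕ => ((setdig p (K y.1) y.2 y.1, y.1 / p ^ (K y.1) % p) : ℕ × ℕ))
      (s := S ×ˢ range p) (t := S ×ˢ range p)
      (f := fun x => omg lam ^ E (setdig p (K x.1) x.2 x.1))
      (g := fun y => omg lam ^ E y.1)
      ?_ ?_ ?_ ?_ ?_
    · rw [this, Finset.sum_product]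
      rw [Finset.mul_sum]
      refine Finset.sum_congr rfl fun i _ => ?_
      simp [mul_comm]
    · rintro ⟨i, d⟩ hx
      rw [Finset.mem_product] at hx ⊢
      obtain ⟨hiS, hd⟩ := hx
      rw [Finset.mem_range] at hd
      exact ⟨hmem i hiS d hd, Finset.mem_range.mpr (hdig i)⟩
    · rintro ⟨j, e⟩ hy
      rw [Finset.mem_product] at hy ⊢
      obtain ⟨hjS, he⟩ := hy
      rw [Finset.mem_range] at he
      exact ⟨hmem j hjS e he, Finset.mem_range.mpr (hdig j)⟩
    · rintro ⟨i, d⟩ hx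
      rw [Finset.mem_product, Finset.mem_range] at hx
      obtain ⟨hiS, hd⟩ := hx
      have hK := hKinv i hiS d hd
      simp only [hK]
      rw [setdig_dig_eq p hp hd, setdig_setdig p hp hd, setdig_self]
    · rintro ⟨j, e⟩ hy
      rw [Finset.mem_product, Finset.mem_range] at hy
      obtain ⟨hjS, he⟩ := hy
      have hK := hKinv j hjS e he
      simp only [hK]
      rw [setdig_dig_eq p hp he, setdig_setdig p hp he, setdig_self]
    · rintro ⟨i, d⟩ _
      rfl
  have hzero : ∀ i ∈ S, ∑ d ∈ range p, omg lam ^ E (setdig p (K i) d i) = 0 := by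
    intro i hi
    have heq : ∀ d ∈ range p, omg lam ^ E (setdig p (K i) d i)
        = omg lam ^ ((E i - ((lam / p : ℕ) : ℤ) * ((i / p ^ (K i) % p : ℕ) : ℤ) * Δ i)
            + ((lam / p : ℕ) : ℤ) * Δ i * (d : ℤ)) := by
      intro d hd
      rw [Finset.mem_range] at hd
      rw [hE i hi d hd]
      congr 1
      ring
    rw [Finset.sum_congr rfl heq]
    exact geom_zero p lam hp hpl hl _ _ (hΔ i hi)
  have : ∑ x ∈ S ×ˢ range p, omg lam ^ E (setdig p (K x.1) x.2 x.1) = 0 := by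
    rw [Finset.sum_product]
    exact Finset.sum_eq_zero hzero
  rw [this] at hdouble
  have hp0 : (p : ℂ) ≠ 0 := by exact_mod_cast hp.ne'
  exact (mul_eq_zero.mp hdouble.symm).resolve_left hp0



def Qsum (m : ℕ) (π : Equiv.Perm (Fin m)) (v : Fin m → ℕ) : ℤ :=
  ∑ β : Fin (m - 1),
      (v (π (Fin.castLE (Nat.sub_le m 1) β)) : ℤ) *
        (v (π ⟨(β : ℕ) + 1, by have := β.isLt; omega⟩) : ℤ)

def Lsum (m lam : ℕ) (cf : Fin m → ZMod lam) (v : Fin m → ℕ) : ℤ :=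
  ∑ β : Fin m, ((cf β).val : ℤ) * (v β : ℤ)

def Rsum (m : ℕ) (π : Equiv.Perm (Fin m)) (v : Fin m → ℕ) (b : Fin m) : ℤ :=
  ∑ β : Fin (m - 1),
    if ((β : ℕ) + 1 = (b : ℕ) - 1) then (v (π (Fin.castLE (Nat.sub_le m 1) β)) : ℤ) else 0

lemma fQuad_eq (p m lam : ℕ) (π : Equiv.Perm (Fin m)) (cf : Fin m → ZMod lam)
    (v : Fin m → ℕ) :
    fQuad p m lam π cf v = ((lam / p : ℕ) : ℤ) * Qsum m π v + Lsum m lam cf v := rfl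

lemma Lsum_update (m lam : ℕ) (cf : Fin m → ZMod lam) (v : Fin m → ℕ) (k : Fin m) (d : ℕ) :
    Lsum m lam cf (Function.update v k d)
      = Lsum m lam cf v + ((cf k).val : ℤ) * ((d : ℤ) - (v k : ℤ)) := by
  unfold Lsum
  have h : ∀ β : Fin m, ((cf β).val : ℤ) * ((Function.update v k d β : ℕ) : ℤ)
      = ((cf β).val : ℤ) * (v β : ℤ)
        + (if β = k then ((cf k).val : ℤ) * ((d : ℤ) - (v k : ℤ)) else 0) := by
    intro β
    by_cases hβ : β = k
    · subst hβ; rw [Function.update_self, if_pos rfl]; ring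
    · rw [Function.update_of_ne hβ, if_neg hβ]; ring
  rw [Finset.sum_congr rfl (fun β _ => h β), Finset.sum_add_distrib,
    Finset.sum_ite_eq' Finset.univ k]
  simp

lemma Qsum_update (m : ℕ) (π : Equiv.Perm (Fin m)) (v : Fin m → ℕ)
    (b b1 : Fin m) (hb : 1 ≤ (b : ℕ)) (hb1 : (b1 : ℕ) = (b : ℕ) - 1) (d : ℕ) :
    Qsum m π (Function.update v (π b1) d)
      = Qsum m π v
        + ((d : ℤ) - (v (π b1) : ℤ)) * ((v (π b) : ℤ) + Rsum m π v b) := by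
  unfold Qsum
  have hbm := b.isLt
  have hlt : (b : ℕ) - 1 < m - 1 := by omega
  set u := Function.update v (π b1) d with hu
  have key : ∀ β : Fin (m - 1),
      (u (π (Fin.castLE (Nat.sub_le m 1) β)) : ℤ) *
          (u (π ⟨(β : ℕ) + 1, by have := β.isLt; omega⟩) : ℤ)
      = (v (π (Fin.castLE (Nat.sub_le m 1) β)) : ℤ) *
          (v (π ⟨(β : ℕ) + 1, by have := β.isLt; omega⟩) : ℤ)
        + (if β = (⟨(b : ℕ) - 1, hlt⟩ : Fin (m - 1))
            then ((d : ℤ) - (v (π b1) : ℤ)) * (v (π b) : ℤ) else 0)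
        + (if ((β : ℕ) + 1 = (b : ℕ) - 1)
            then (v (π (Fin.castLE (Nat.sub_le m 1) β)) : ℤ) * ((d : ℤ) - (v (π b1) : ℤ))
            else 0) := by
    intro β
    have hβm := β.isLt
    by_cases h1 : (β : ℕ) = (b : ℕ) - 1
    · have hc1 : Fin.castLE (Nat.sub_le m 1) β = b1 := by
        apply Fin.ext; simp [h1, hb1]
      have hc2 : (⟨(β : ℕ) + 1, by omega⟩ : Fin m) = b := by
        apply Fin.ext; simp; omega
      have hne : π b ≠ π b1 := by
        intro hcon
        have := π.injective hcon
        apply_fun (fun z => (z : ℕ)) at this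
        omega
      have heq : β = (⟨(b : ℕ) - 1, hlt⟩ : Fin (m - 1)) := by
        apply Fin.ext; simp [h1]
      have hne2 : ¬ ((β : ℕ) + 1 = (b : ℕ) - 1) := by omega
      rw [if_pos heq, if_neg hne2, hu]
      rw [hc1, hc2, Function.update_self, Function.update_of_ne hne]
      ring
    · by_cases h2 : (β : ℕ) + 1 = (b : ℕ) - 1
      · have hc2 : (⟨(β : ℕ) + 1, by omega⟩ : Fin m) = b1 := by
          apply Fin.ext; simp [hb1]; omega
        have hne : π (Fin.castLE (Nat.sub_le m 1) β) ≠ π b1 := by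
          intro hcon
          have := π.injective hcon
          apply_fun (fun z => (z : ℕ)) at this
          simp [hb1] at this
          omega
        have heq : ¬ (β = (⟨(b : ℕ) - 1, hlt⟩ : Fin (m - 1))) := by
          intro hcon; apply_fun (fun z => (z : ℕ)) at hcon; simp at hcon; omega
        rw [if_neg heq, if_pos h2, hu, hc2, Function.update_self,
          Function.update_of_ne hne]
        ring
      · have hne1 : π (Fin.castLE (Nat.sub_le m 1) β) ≠ π b1 := by
          intro hcon
          have := π.injective hcon
          apply_fun (fun z => (z : ℕ)) at this
          simp [hb1] at this
          omega
        have hne2 : π (⟨(β : ℕ) + 1, by omega⟩ : Fin m) ≠ π b1 := by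
          intro hcon
          have := π.injective hcon
          apply_fun (fun z => (z : ℕ)) at this
          simp [hb1] at this
          omega
        have heq : ¬ (β = (⟨(b : ℕ) - 1, hlt⟩ : Fin (m - 1))) := by
          intro hcon; apply_fun (fun z => (z : ℕ)) at hcon; simp at hcon; omega
        rw [if_neg heq, if_neg h2, hu, Function.update_of_ne hne1,
          Function.update_of_ne hne2]
        ring
  rw [Finset.sum_congr rfl (fun β _ => key β), Finset.sum_add_distrib,
    Finset.sum_add_distrib, Finset.sum_ite_eq' Finset.univ]
  have hR : ∑ β : Fin (m - 1),
      (if ((β : ℕ) + 1 = (b : ℕ) - 1)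
        then (v (π (Fin.castLE (Nat.sub_le m 1) β)) : ℤ) * ((d : ℤ) - (v (π b1) : ℤ))
        else 0)
      = Rsum m π v b * ((d : ℤ) - (v (π b1) : ℤ)) := by
    rw [Rsum, Finset.sum_mul]
    refine Finset.sum_congr rfl fun β _ => ?_
    split_ifs <;> simp
  rw [hR]
  simp only [Finset.mem_univ, if_pos]
  ring


lemma Ediff (p m lam : ℕ) (hm : 0 < m) (π : Equiv.Perm (Fin m)) (cf : Fin m → ZMod lam)
    (c : ZMod lam) (t t' : ℕ) (v w : Fin m → ℕ) (b b1 : Fin m)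
    (hb : 1 ≤ (b : ℕ)) (hb1 : (b1 : ℕ) = (b : ℕ) - 1) (d : ℕ)
    (hagree : ∀ cβ : Fin m, (cβ : ℕ) < (b : ℕ) → v (π cβ) = w (π cβ)) :
    aFun p m lam hm π cf c t 0 (Function.update v (π b1) d)
      - aFun p m lam hm π cf c t' 0 (Function.update w (π b1) d)
    = (aFun p m lam hm π cf c t 0 v - aFun p m lam hm π cf c t' 0 w)
      + ((lam / p : ℕ) : ℤ) *
          (((d : ℤ) - (v (π b1) : ℤ)) * ((v (π b) : ℤ) - (w (π b) : ℤ))) := by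
  have hbm := b.isLt
  have hQv := Qsum_update m π v b b1 hb hb1 d
  have hQw := Qsum_update m π w b b1 hb hb1 d
  have hLv := Lsum_update m lam cf v (π b1) d
  have hLw := Lsum_update m lam cf w (π b1) d
  have hmne : π b1 ≠ π (⟨m - 1, by omega⟩ : Fin m) := by
    intro hcon
    have := π.injective hcon
    apply_fun (fun z => (z : ℕ)) at this
    simp [hb1] at this
    omega
  have hupv : (Function.update v (π b1) d) (π (⟨m - 1, by omega⟩ : Fin m))
      = v (π (⟨m - 1, by omega⟩ : Fin m)) := Function.update_of_ne (Ne.symm hmne) _ _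
  have hupw : (Function.update w (π b1) d) (π (⟨m - 1, by omega⟩ : Fin m))
      = w (π (⟨m - 1, by omega⟩ : Fin m)) := Function.update_of_ne (Ne.symm hmne) _ _
  have hvb1 : v (π b1) = w (π b1) := hagree b1 (by omega)
  have hRvw : Rsum m π v b = Rsum m π w b := by
    unfold Rsum
    refine Finset.sum_congr rfl fun β _ => ?_
    by_cases hc : (β : ℕ) + 1 = (b : ℕ) - 1
    · rw [if_pos hc, if_pos hc, hagree _ (by simp; omega)]
    · rw [if_neg hc, if_neg hc]
  simp only [aFun, fQuad_eq, Nat.cast_zero]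
  rw [hQv, hQw, hLv, hLw, hupv, hupw]
  rw [hvb1, hRvw]
  ring


lemma not_dvd_sub (p a b : ℕ) (ha : a < p) (hb : b < p) (hab : a ≠ b) :
    ¬ ((p : ℤ) ∣ (a : ℤ) - (b : ℤ)) := by
  intro h
  have h1 : (a : ℤ) - b ≠ 0 := by omega
  have h2 : (p : ℤ) ≤ |(a : ℤ) - b| := Int.le_of_dvd (abs_pos.mpr h1) ((dvd_abs _ _).mpr h)
  rcases abs_cases ((a : ℤ) - (b : ℤ)) with ⟨he, _⟩ | ⟨he, _⟩ <;> omega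

lemma dig_injective (p : ℕ) (hp : 0 < p) :
    ∀ m n n', n < p ^ m → n' < p ^ m →
      (∀ j, j < m → n / p ^ j % p = n' / p ^ j % p) → n = n' := by
  intro m
  induction m with
  | zero => intro n n' h h' _; simp at h h'; omega
  | succ m ih =>
    intro n n' hn hn' hd
    have h0 : n % p = n' % p := by simpa using hd 0 (by omega)
    have hdiv : ∀ (a : ℕ) (j : ℕ), a / p / p ^ j = a / p ^ (j+1) := by
      intro a j
      rw [Nat.div_div_eq_div_mul, pow_succ']
    have ht : n / p = n' / p := by
      apply ih
      · rw [Nat.div_lt_iff_lt_mul hp, ← pow_succ]; exact hn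
      · rw [Nat.div_lt_iff_lt_mul hp, ← pow_succ]; exact hn'
      · intro j hj
        rw [hdiv, hdiv]
        exact hd (j+1) (by omega)
    have e1 : p * (n / p) + n % p = n := Nat.div_add_mod n p
    have e2 : p * (n' / p) + n' % p = n' := Nat.div_add_mod n' p
    rw [ht, h0] at e1
    omega

lemma dig_setdig (p m : ℕ) (hp : 0 < p) {k d : ℕ} (n : ℕ) (hk : k < m) (hd : d < p) :
    dig p m (setdig p k d n) = Function.update (dig p m n) ⟨k, hk⟩ d := by
  funext j
  by_cases hj : (j : ℕ) = k
  · have hjk : j = (⟨k, hk⟩ : Fin m) := Fin.ext hj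
    rw [hjk, Function.update_self]
    exact setdig_dig_eq p hp hd k n
  · rw [Function.update_of_ne (by simpa [Fin.ext_iff] using hj)]
    exact setdig_dig_ne p hp hd k n j hj

lemma aFun_alpha_diff (p m lam : ℕ) (hm : 0 < m) (π : Equiv.Perm (Fin m))
    (cf : Fin m → ZMod lam) (c : ZMod lam) (t t' α : ℕ) (v w : Fin m → ℕ) :
    aFun p m lam hm π cf c t α v - aFun p m lam hm π cf c t' α w
    = (aFun p m lam hm π cf c t 0 v - aFun p m lam hm π cf c t' 0 w)
      + ((lam / p : ℕ) : ℤ) * ((v (π ⟨0, hm⟩) : ℤ) - (w (π ⟨0, hm⟩) : ℤ)) * α := by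
  simp only [aFun, Nat.cast_zero]; ring

lemma aFun_diff_same (p m lam : ℕ) (hm : 0 < m) (π : Equiv.Perm (Fin m))
    (cf : Fin m → ZMod lam) (c : ZMod lam) (t t' : ℕ) (v : Fin m → ℕ) :
    aFun p m lam hm π cf c t 0 v - aFun p m lam hm π cf c t' 0 v
    = ((lam / p : ℕ) : ℤ) * ((t : ℤ) - (t' : ℤ)) * (v (π ⟨m - 1, by omega⟩) : ℤ) := by
  simp only [aFun, Nat.cast_zero]; ring

lemma omg_mul_conj (lam : ℕ) (A B : ℤ) :
    omg lam ^ A * (starRingEnd ℂ) (omg lam ^ B) = omg lam ^ (A - B) := by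
  rw [omg_zpow_conj, ← zpow_add₀ (omg_ne_zero lam), sub_eq_add_neg]

def piN (m : ℕ) (π : Equiv.Perm (Fin m)) (cn : ℕ) : ℕ :=
  if h : cn < m then ((π ⟨cn, h⟩) : ℕ) else 0

lemma piN_lt (m : ℕ) (hm : 0 < m) (π : Equiv.Perm (Fin m)) (cn : ℕ) : piN m π cn < m := by
  unfold piN; split
  · exact (π _).isLt
  · exact hm

lemma piN_inj (m : ℕ) (π : Equiv.Perm (Fin m)) {a b : ℕ} (ha : a < m) (hb : b < m)
    (h : piN m π a = piN m π b) : a = b := by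
  unfold piN at h
  rw [dif_pos ha, dif_pos hb] at h
  have := π.injective (Fin.ext h)
  simpa [Fin.ext_iff] using this


/-- smallest `cn` (or `m`) such that the digits of `i+u'` and `i` differ at position `π cn` -/
lemma piN_eq (m : ℕ) (π : Equiv.Perm (Fin m)) {cn : ℕ} (h : cn < m) :
    piN m π cn = ((π (⟨cn, h⟩ : Fin m) : Fin m) : ℕ) := by
  rw [piN, dif_pos h]

/-- smallest index -/
def Bfun (p m u' : ℕ) (π : Equiv.Perm (Fin m)) (i : ℕ) : ℕ :=
  Nat.find (p := fun cn => m ≤ cn ∨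
    ((i + u') / p ^ (piN m π cn) % p ≠ i / p ^ (piN m π cn) % p))
    ⟨m, Or.inl le_rfl⟩

def Kfun (p m u' : ℕ) (π : Equiv.Perm (Fin m)) (i : ℕ) : ℕ :=
  piN m π (Bfun p m u' π i - 1)

lemma Bfun_spec (p m u' : ℕ) (π : Equiv.Perm (Fin m)) (i : ℕ) :
    m ≤ Bfun p m u' π i ∨
      ((i + u') / p ^ (piN m π (Bfun p m u' π i)) % p
        ≠ i / p ^ (piN m π (Bfun p m u' π i)) % p) :=
  Nat.find_spec (p := fun cn => m ≤ cn ∨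
    ((i + u') / p ^ (piN m π cn) % p ≠ i / p ^ (piN m π cn) % p))
    ⟨m, Or.inl le_rfl⟩

lemma Bfun_min (p m u' : ℕ) (π : Equiv.Perm (Fin m)) (i : ℕ) {cn : ℕ}
    (h : cn < Bfun p m u' π i) :
    (i + u') / p ^ (piN m π cn) % p = i / p ^ (piN m π cn) % p := by
  have := Nat.find_min (p := fun cn => m ≤ cn ∨
    ((i + u') / p ^ (piN m π cn) % p ≠ i / p ^ (piN m π cn) % p))
    ⟨m, Or.inl le_rfl⟩ h
  simp only [not_or, ne_eq, not_not] at this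
  exact this.2

lemma Bfun_le (p m u' : ℕ) (π : Equiv.Perm (Fin m)) (i : ℕ) {cn : ℕ}
    (h : m ≤ cn ∨ ((i + u') / p ^ (piN m π cn) % p ≠ i / p ^ (piN m π cn) % p)) :
    Bfun p m u' π i ≤ cn :=
  Nat.find_le (p := fun cn => m ≤ cn ∨
    ((i + u') / p ^ (piN m π cn) % p ≠ i / p ^ (piN m π cn) % p)) h

lemma Bfun_eq (p m u' : ℕ) (π : Equiv.Perm (Fin m)) (i : ℕ) {n : ℕ}
    (h1 : m ≤ n ∨ ((i + u') / p ^ (piN m π n) % p ≠ i / p ^ (piN m π n) % p))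
    (h2 : ∀ cn < n, ¬(m ≤ cn ∨
      ((i + u') / p ^ (piN m π cn) % p ≠ i / p ^ (piN m π cn) % p))) :
    Bfun p m u' π i = n := by
  rw [Bfun, Nat.find_eq_iff]
  exact ⟨h1, h2⟩

lemma Kfun_def (p m u' : ℕ) (π : Equiv.Perm (Fin m)) (i : ℕ) :
    Kfun p m u' π i = piN m π (Bfun p m u' π i - 1) := rfl

attribute [irreducible] Bfun Kfun

set_option maxHeartbeats 1000000 in
/-- the `u' > 0` cancellation -/
lemma sum_zero_pos (p : ℕ) (hp : 0 < p) (m : ℕ) (hm : 0 < m) (lam : ℕ)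
    (hpl : p ∣ lam) (hlam : 0 < lam)
    (π : Equiv.Perm (Fin m)) (cf : Fin m → ZMod lam) (c : ZMod lam)
    (t t' : ℕ) (u' : ℕ) (hu'pos : 0 < u') (hu' : u' < p ^ m) :
    ∑ i ∈ (range (p ^ m - u')).filter
        (fun i => (i + u') / p ^ ((π (⟨0, hm⟩ : Fin m) : Fin m) : ℕ) % p
          = i / p ^ ((π (⟨0, hm⟩ : Fin m) : Fin m) : ℕ) % p),
      omg lam ^ (aFun p m lam hm π cf c t 0 (dig p m (i + u'))
        - aFun p m lam hm π cf c t' 0 (dig p m i)) = 0 := by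
  set S0 := (range (p ^ m - u')).filter
      (fun i => (i + u') / p ^ ((π (⟨0, hm⟩ : Fin m) : Fin m) : ℕ) % p
        = i / p ^ ((π (⟨0, hm⟩ : Fin m) : Fin m) : ℕ) % p) with hS0
  -- basic facts for members of S0
  have hmemS : ∀ i ∈ S0, i < p ^ m - u' ∧
      (i + u') / p ^ ((π (⟨0, hm⟩ : Fin m) : Fin m) : ℕ) % p
        = i / p ^ ((π (⟨0, hm⟩ : Fin m) : Fin m) : ℕ) % p := by
    intro i hi
    rw [hS0, Finset.mem_filter, Finset.mem_range] at hi
    exact hi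
  have hpiN0 : piN m π 0 = ((π (⟨0, hm⟩ : Fin m) : Fin m) : ℕ) := piN_eq m π hm
  have hBm : ∀ i ∈ S0, Bfun p m u' π i < m := by
    intro i hi
    obtain ⟨hir, _⟩ := hmemS i hi
    have hilt : i < p ^ m := by omega
    have hiu : i + u' < p ^ m := by omega
    have hne : i + u' ≠ i := by omega
    have hdiff : ∃ j, j < m ∧ (i + u') / p ^ j % p ≠ i / p ^ j % p := by
      by_contra hcon
      push_neg at hcon
      exact hne (dig_injective p hp m (i + u') i hiu hilt (fun j hj => hcon j hj))
    obtain ⟨j, hj, hjne⟩ := hdiff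
    have hpn : piN m π ((π.symm (⟨j, hj⟩ : Fin m) : Fin m) : ℕ) = j := by
      rw [piN_eq m π (π.symm (⟨j, hj⟩ : Fin m)).isLt, Fin.eta, Equiv.apply_symm_apply]
    have hle : Bfun p m u' π i ≤ ((π.symm (⟨j, hj⟩ : Fin m) : Fin m) : ℕ) := by
      apply Bfun_le
      rw [hpn]
      exact Or.inr hjne
    exact lt_of_le_of_lt hle (π.symm (⟨j, hj⟩ : Fin m)).isLt
  have hB1 : ∀ i ∈ S0, 1 ≤ Bfun p m u' π i := by
    intro i hi
    by_contra hcon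
    have hB0 : Bfun p m u' π i = 0 := by omega
    have hsp := Bfun_spec p m u' π i
    rw [hB0, hpiN0] at hsp
    rcases hsp with h | h
    · omega
    · exact h (hmemS i hi).2
  have hF3 : ∀ i : ℕ, ∀ cn < Bfun p m u' π i,
      (i + u') / p ^ (piN m π cn) % p = i / p ^ (piN m π cn) % p :=
    fun i cn hcn => Bfun_min p m u' π i hcn
  have hF4 : ∀ i ∈ S0,
      (i + u') / p ^ (piN m π (Bfun p m u' π i)) % p
        ≠ i / p ^ (piN m π (Bfun p m u' π i)) % p := by
    intro i hi
    rcases Bfun_spec p m u' π i with h | h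
    · exact absurd (hBm i hi) (by omega)
    · exact h
  have hKlt : ∀ i, Kfun p m u' π i < m := fun i => by
    rw [Kfun_def]; exact piN_lt m hm π _
  have hadd : ∀ i ∈ S0, ∀ d : ℕ,
      setdig p (Kfun p m u' π i) d i + u' = setdig p (Kfun p m u' π i) d (i + u') := by
    intro i hi d
    rw [Kfun_def]
    exact setdig_add p _ d i u' (hF3 i (Bfun p m u' π i - 1) (by have := hB1 i hi; omega))
  -- membership preservation
  have hmem : ∀ i ∈ S0, ∀ d < p, setdig p (Kfun p m u' π i) d i ∈ S0 := by
    intro i hi d hd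
    obtain ⟨hir, hP⟩ := hmemS i hi
    have hiu : i + u' < p ^ m := by omega
    have hlt2 : setdig p (Kfun p m u' π i) d (i + u') < p ^ m :=
      setdig_lt p hp (hKlt i) hd hiu
    rw [hS0, Finset.mem_filter, Finset.mem_range]
    constructor
    · have := hadd i hi d
      omega
    · rw [hadd i hi d]
      by_cases hB10 : Bfun p m u' π i - 1 = 0
      · have hKg : Kfun p m u' π i = ((π (⟨0, hm⟩ : Fin m) : Fin m) : ℕ) := by
          rw [Kfun_def, hB10]; exact hpiN0
        rw [← hKg, setdig_dig_eq p hp hd, setdig_dig_eq p hp hd]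
      · have hKg : Kfun p m u' π i ≠ ((π (⟨0, hm⟩ : Fin m) : Fin m) : ℕ) := by
          rw [← hpiN0, Kfun_def]
          intro hcon
          exact hB10 (piN_inj m π (by have := hBm i hi; omega) hm hcon)
        rw [setdig_dig_ne p hp hd _ _ _ (Ne.symm hKg),
          setdig_dig_ne p hp hd _ _ _ (Ne.symm hKg)]
        exact hP
  -- K invariance
  have hKinv : ∀ i ∈ S0, ∀ d < p,
      Kfun p m u' π (setdig p (Kfun p m u' π i) d i) = Kfun p m u' π i := by
    intro i hi d hd
    have hb1 := hB1 i hi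
    have hbm := hBm i hi
    have haddi := hadd i hi d
    have hBinv : Bfun p m u' π (setdig p (Kfun p m u' π i) d i) = Bfun p m u' π i := by
      apply Bfun_eq
      · refine Or.inr ?_
        have hpn : piN m π (Bfun p m u' π i) ≠ Kfun p m u' π i := by
          rw [Kfun_def]
          intro hcon
          have := piN_inj m π (by omega) (by omega) hcon
          omega
        rw [haddi, setdig_dig_ne p hp hd _ _ _ hpn, setdig_dig_ne p hp hd _ _ _ hpn]
        exact hF4 i hi
      · intro cn hcn
        rintro (h | h)
        · omega
        · apply h
          rw [haddi]
          by_cases hcb : cn = Bfun p m u' π i - 1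
          · have hpc : piN m π cn = Kfun p m u' π i := by rw [Kfun_def, hcb]
            rw [hpc, setdig_dig_eq p hp hd, setdig_dig_eq p hp hd]
          · have hpn : piN m π cn ≠ Kfun p m u' π i := by
              rw [Kfun_def]
              intro hcon
              exact hcb (piN_inj m π (by omega) (by omega) hcon)
            rw [setdig_dig_ne p hp hd _ _ _ hpn, setdig_dig_ne p hp hd _ _ _ hpn]
            exact hF3 i cn hcn
    rw [Kfun_def, hBinv, ← Kfun_def]
  -- apply the cancellation lemma
  apply cancel p lam hp hpl hlam S0 _
    (fun i => (((i + u') / p ^ (piN m π (Bfun p m u' π i)) % p : ℕ) : ℤ)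
      - ((i / p ^ (piN m π (Bfun p m u' π i)) % p : ℕ) : ℤ))
    (Kfun p m u' π) hmem hKinv
  · -- hE
    intro i hi d hd
    have hb1 := hB1 i hi
    have hbm := hBm i hi
    have haddi := hadd i hi d
    have hv : dig p m (setdig p (Kfun p m u' π i) d i + u')
        = Function.update (dig p m (i + u')) ⟨Kfun p m u' π i, hKlt i⟩ d := by
      rw [haddi]; exact dig_setdig p m hp _ (hKlt i) hd
    have hw : dig p m (setdig p (Kfun p m u' π i) d i)
        = Function.update (dig p m i) ⟨Kfun p m u' π i, hKlt i⟩ d :=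
      dig_setdig p m hp _ (hKlt i) hd
    have hkb1 : (⟨Kfun p m u' π i, hKlt i⟩ : Fin m)
        = π (⟨Bfun p m u' π i - 1, by omega⟩ : Fin m) := by
      apply Fin.ext
      show Kfun p m u' π i = _
      conv_lhs => rw [Kfun_def]
      exact piN_eq m π (show Bfun p m u' π i - 1 < m by omega)
    have hagree : ∀ cβ : Fin m, (cβ : ℕ) < ((⟨Bfun p m u' π i, hbm⟩ : Fin m) : ℕ) →
        dig p m (i + u') (π cβ) = dig p m i (π cβ) := by
      intro cβ hc
      have h3 := hF3 i (cβ : ℕ) hc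
      rw [piN_eq m π cβ.isLt, Fin.eta] at h3
      exact h3
    show aFun p m lam hm π cf c t 0 (dig p m (setdig p (Kfun p m u' π i) d i + u'))
        - aFun p m lam hm π cf c t' 0 (dig p m (setdig p (Kfun p m u' π i) d i))
      = (aFun p m lam hm π cf c t 0 (dig p m (i + u'))
          - aFun p m lam hm π cf c t' 0 (dig p m i))
        + ((lam / p : ℕ) : ℤ) * (((d : ℤ) - ((i / p ^ (Kfun p m u' π i) % p : ℕ) : ℤ))
            * ((((i + u') / p ^ (piN m π (Bfun p m u' π i)) % p : ℕ) : ℤ)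
              - ((i / p ^ (piN m π (Bfun p m u' π i)) % p : ℕ) : ℤ)))
    rw [hv, hw, hkb1]
    rw [Ediff p m lam hm π cf c t t' (dig p m (i + u')) (dig p m i)
      (⟨Bfun p m u' π i, hbm⟩ : Fin m) (⟨Bfun p m u' π i - 1, by omega⟩ : Fin m)
      (by simpa using hb1) (by simp) d hagree]
    have hKi : Kfun p m u' π i
        = ((π (⟨Bfun p m u' π i - 1, by omega⟩ : Fin m) : Fin m) : ℕ) := by
      conv_lhs => rw [Kfun_def]
      exact piN_eq m π (show Bfun p m u' π i - 1 < m by omega)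
    have hnat1 : i / p ^ (Kfun p m u' π i) % p
        = dig p m (i + u') (π (⟨Bfun p m u' π i - 1, by omega⟩ : Fin m)) := by
      have h := (hF3 i (Bfun p m u' π i - 1) (by omega)).symm
      show i / p ^ (Kfun p m u' π i) % p
          = (i + u') / p ^ ((π (⟨Bfun p m u' π i - 1, by omega⟩ : Fin m) : Fin m) : ℕ) % p
      conv_lhs => rw [Kfun_def]
      conv_rhs => rw [← piN_eq m π (show Bfun p m u' π i - 1 < m by omega)]
      exact h
    have hnat2 : (i + u') / p ^ (piN m π (Bfun p m u' π i)) % p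
        = dig p m (i + u') (π (⟨Bfun p m u' π i, hbm⟩ : Fin m)) := by
      show _ = (i + u') / p ^ ((π (⟨Bfun p m u' π i, hbm⟩ : Fin m) : Fin m) : ℕ) % p
      conv_lhs => rw [piN_eq m π hbm]
    have hnat3 : i / p ^ (piN m π (Bfun p m u' π i)) % p
        = dig p m i (π (⟨Bfun p m u' π i, hbm⟩ : Fin m)) := by
      show _ = i / p ^ ((π (⟨Bfun p m u' π i, hbm⟩ : Fin m) : Fin m) : ℕ) % p
      conv_lhs => rw [piN_eq m π hbm]
    conv_rhs => rw [hnat1, hnat2, hnat3]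
  · -- hΔ
    intro i hi
    exact not_dvd_sub p _ _ (Nat.mod_lt _ hp) (Nat.mod_lt _ hp) (hF4 i hi)

/-- the `u' = 0`, `t ≠ t'` cancellation -/
lemma sum_zero_tne (p : ℕ) (hp : 0 < p) (m : ℕ) (hm : 0 < m) (lam : ℕ)
    (hpl : p ∣ lam) (hlam : 0 < lam)
    (π : Equiv.Perm (Fin m)) (cf : Fin m → ZMod lam) (c : ZMod lam)
    (t t' : ℕ) (ht : t < p) (ht' : t' < p) (htt : t ≠ t') :
    ∑ i ∈ range (p ^ m), omg lam ^ (aFun p m lam hm π cf c t 0 (dig p m i)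
        - aFun p m lam hm π cf c t' 0 (dig p m i)) = 0 := by
  have hklt : ((π (⟨m - 1, by omega⟩ : Fin m) : Fin m) : ℕ) < m := (π _).isLt
  apply cancel p lam hp hpl hlam (range (p ^ m)) _ (fun _ => (t : ℤ) - (t' : ℤ))
    (fun _ => ((π (⟨m - 1, by omega⟩ : Fin m) : Fin m) : ℕ))
  · intro i hi d hd
    rw [Finset.mem_range] at hi ⊢
    exact setdig_lt p hp hklt hd hi
  · intro i _ d _
    rfl
  · intro i hi d hd
    show aFun p m lam hm π cf c t 0
        (dig p m (setdig p ((π (⟨m - 1, by omega⟩ : Fin m) : Fin m) : ℕ) d i))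
      - aFun p m lam hm π cf c t' 0
        (dig p m (setdig p ((π (⟨m - 1, by omega⟩ : Fin m) : Fin m) : ℕ) d i))
      = (aFun p m lam hm π cf c t 0 (dig p m i) - aFun p m lam hm π cf c t' 0 (dig p m i))
        + ((lam / p : ℕ) : ℤ) * (((d : ℤ)
            - ((i / p ^ ((π (⟨m - 1, by omega⟩ : Fin m) : Fin m) : ℕ) % p : ℕ) : ℤ))
          * ((t : ℤ) - (t' : ℤ)))
    rw [dig_setdig p m hp i hklt hd]
    rw [aFun_diff_same p m lam hm π cf c t t', aFun_diff_same p m lam hm π cf c t t']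
    have hidx : (⟨((π (⟨m - 1, by omega⟩ : Fin m) : Fin m) : ℕ), hklt⟩ : Fin m)
        = π (⟨m - 1, by omega⟩ : Fin m) := Fin.ext rfl
    rw [hidx, Function.update_self]
    have hdig : dig p m i (π (⟨m - 1, by omega⟩ : Fin m))
        = i / p ^ ((π (⟨m - 1, by omega⟩ : Fin m) : Fin m) : ℕ) % p := rfl
    rw [hdig]
    ring
  · intro i _
    exact not_dvd_sub p t t' ht ht' htt

/-- the main theorem for nonnegative shifts -/
lemma main_nonneg (p : ℕ) (hp : p.Prime) (m : ℕ) (hm : 0 < m) (lam : ℕ)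
    (hpl : p ∣ lam) (hlam : 0 < lam)
    (π : Equiv.Perm (Fin m)) (cf : Fin m → ZMod lam) (c : ZMod lam)
    (t t' : ℕ) (ht : t < p) (ht' : t' < p) (u : ℤ) (hu0 : 0 ≤ u)
    (hu : u.natAbs < p ^ m) :
    codeCorr p (p ^ m) (codeC p m lam hm π cf c t) (codeC p m lam hm π cf c t') u =
      if u = 0 ∧ t = t' then (p : ℂ) ^ (m + 1) else 0 := by
  have hp0 : 0 < p := hp.pos
  have hu' : u.toNat < p ^ m := by omega
  have stepA : codeCorr p (p ^ m) (codeC p m lam hm π cf c t) (codeC p m lam hm π cf c t') u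
      = ∑ i ∈ range (p ^ m - u.toNat), ∑ ν ∈ range p,
          omg lam ^ ((aFun p m lam hm π cf c t 0 (dig p m (i + u.toNat))
              - aFun p m lam hm π cf c t' 0 (dig p m i))
            + ((lam / p : ℕ) : ℤ) * ((dig p m (i + u.toNat) (π ⟨0, hm⟩) : ℤ)
              - (dig p m i (π ⟨0, hm⟩) : ℤ)) * ν) := by
    rw [codeCorr]
    have h1 : ∀ ν ∈ range p,
        aCorr (p ^ m) (codeC p m lam hm π cf c t ν) (codeC p m lam hm π cf c t' ν) u
        = ∑ i ∈ range (p ^ m - u.toNat),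
            omg lam ^ (aFun p m lam hm π cf c t ν (dig p m (i + u.toNat))
              - aFun p m lam hm π cf c t' ν (dig p m i)) := by
      intro ν _
      rw [aCorr, if_pos hu0]
      refine Finset.sum_congr rfl fun i _ => ?_
      show omg lam ^ (aFun p m lam hm π cf c t ν (dig p m (i + u.toNat)))
          * (starRingEnd ℂ) (omg lam ^ (aFun p m lam hm π cf c t' ν (dig p m i))) = _
      rw [omg_mul_conj]
    rw [Finset.sum_congr rfl h1, Finset.sum_comm]
    refine Finset.sum_congr rfl fun i _ => Finset.sum_congr rfl fun ν _ => ?_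
    rw [aFun_alpha_diff p m lam hm π cf c t t' ν (dig p m (i + u.toNat)) (dig p m i)]
  have stepB : ∀ i ∈ range (p ^ m - u.toNat),
      (∑ ν ∈ range p,
          omg lam ^ ((aFun p m lam hm π cf c t 0 (dig p m (i + u.toNat))
              - aFun p m lam hm π cf c t' 0 (dig p m i))
            + ((lam / p : ℕ) : ℤ) * ((dig p m (i + u.toNat) (π ⟨0, hm⟩) : ℤ)
              - (dig p m i (π ⟨0, hm⟩) : ℤ)) * ν))
      = if (i + u.toNat) / p ^ ((π (⟨0, hm⟩ : Fin m) : Fin m) : ℕ) % p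
            = i / p ^ ((π (⟨0, hm⟩ : Fin m) : Fin m) : ℕ) % p
        then (p : ℂ) * omg lam ^ (aFun p m lam hm π cf c t 0 (dig p m (i + u.toNat))
            - aFun p m lam hm π cf c t' 0 (dig p m i))
        else 0 := by
    intro i _
    by_cases hPi : (i + u.toNat) / p ^ ((π (⟨0, hm⟩ : Fin m) : Fin m) : ℕ) % p
        = i / p ^ ((π (⟨0, hm⟩ : Fin m) : Fin m) : ℕ) % p
    · rw [if_pos hPi]
      have hPd : dig p m (i + u.toNat) (π ⟨0, hm⟩) = dig p m i (π ⟨0, hm⟩) := hPi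
      have hz : ((dig p m (i + u.toNat) (π ⟨0, hm⟩) : ℤ)
          - (dig p m i (π ⟨0, hm⟩) : ℤ)) = 0 := by rw [hPd]; ring
      rw [Finset.sum_congr rfl (fun ν _ => by rw [hz, mul_zero, zero_mul, add_zero])]
      rw [Finset.sum_const, Finset.card_range, nsmul_eq_mul]
    · rw [if_neg hPi]
      apply geom_zero p lam hp0 hpl hlam
      exact not_dvd_sub p _ _ (Nat.mod_lt _ hp0) (Nat.mod_lt _ hp0) hPi
  rw [stepA, Finset.sum_congr rfl stepB, ← Finset.sum_filter, ← Finset.mul_sum]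
  by_cases hcase : u = 0 ∧ t = t'
  · obtain ⟨hu00, htt⟩ := hcase
    subst htt
    rw [if_pos ⟨hu00, rfl⟩]
    have h0 : u.toNat = 0 := by omega
    simp only [h0, Nat.add_zero, Nat.sub_zero]
    rw [Finset.filter_true]
    have hone : ∀ i ∈ range (p ^ m),
        omg lam ^ (aFun p m lam hm π cf c t 0 (dig p m i)
          - aFun p m lam hm π cf c t 0 (dig p m i)) = 1 := by
      intro i _
      rw [sub_self, zpow_zero]
    rw [Finset.sum_congr rfl hone, Finset.sum_const, Finset.card_range, nsmul_eq_mul,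
      mul_one]
    push_cast
    ring
  · rw [if_neg hcase]
    by_cases h0 : u.toNat = 0
    · have hu00 : u = 0 := by omega
      have htt : t ≠ t' := fun hc => hcase ⟨hu00, hc⟩
      simp only [h0, Nat.add_zero, Nat.sub_zero]
      rw [Finset.filter_true]
      rw [sum_zero_tne p hp0 m hm lam hpl hlam π cf c t t' ht ht' htt, mul_zero]
    · rw [sum_zero_pos p hp0 m hm lam hpl hlam π cf c t t' u.toNat
        (Nat.pos_of_ne_zero h0) hu', mul_zero]

end CCCaux

/-- the family `{C_t^p : t = 0,…,p-1}` forms a `(p,p,p^m)`-CCC. -/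
theorem statement0 (p : ℕ) (hp : p.Prime) (m : ℕ) (hm : 0 < m) (q : ℕ) (hq : 0 < q)
    (π : Equiv.Perm (Fin m)) (cf : Fin m → ZMod (Nat.lcm p q)) (c : ZMod (Nat.lcm p q))
    (t t' : ℕ) (ht : t < p) (ht' : t' < p) (u : ℤ) (hu : u.natAbs < p ^ m) :
    codeCorr p (p ^ m) (codeC p m (Nat.lcm p q) hm π cf c t)
        (codeC p m (Nat.lcm p q) hm π cf c t') u =
      if u = 0 ∧ t = t' then (p : ℂ) ^ (m + 1) else 0 := by
  have hp0 : 0 < p := hp.pos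
  have hpl : p ∣ Nat.lcm p q := Nat.dvd_lcm_left p q
  have hlam : 0 < Nat.lcm p q := Nat.pos_of_ne_zero (Nat.lcm_ne_zero hp0.ne' hq.ne')
  rcases le_or_gt 0 u with hu0 | hu0
  · exact CCCaux.main_nonneg p hp m hm (Nat.lcm p q) hpl hlam π cf c t t' ht ht' u hu0 hu
  · have hne : ¬(u = 0 ∧ t = t') := by
      rintro ⟨h, -⟩; omega
    rw [if_neg hne]
    have hrefl : codeCorr p (p ^ m) (codeC p m (Nat.lcm p q) hm π cf c t)
        (codeC p m (Nat.lcm p q) hm π cf c t') u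
        = (starRingEnd ℂ) (codeCorr p (p ^ m) (codeC p m (Nat.lcm p q) hm π cf c t')
            (codeC p m (Nat.lcm p q) hm π cf c t) (-u)) := by
      rw [codeCorr, codeCorr, map_sum]
      refine Finset.sum_congr rfl fun ν _ => ?_
      rw [aCorr, aCorr, if_neg (by omega : ¬(0:ℤ) ≤ u), if_pos (by omega : (0:ℤ) ≤ -u)]
      rw [map_sum]
      refine Finset.sum_congr rfl fun i _ => ?_
      rw [map_mul, Complex.conj_conj, mul_comm]
    rw [hrefl, CCCaux.main_nonneg p hp m hm (Nat.lcm p q) hpl hlam π cf c t' t ht' ht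
      (-u) (by omega) (by omega)]
    rw [if_neg (show ¬(-u = 0 ∧ t' = t) by rintro ⟨h, -⟩; omega), map_zero]
end

section
/- For every prime p, every integer m ≥ 1, every positive integer q, every permutation π of {1,…,m}, all coefficients c_1,…,c_m ∈ Z_λ, constant c ∈ Z_λ (where λ = lcm(p,q)), and every t ∈ {0,…,p−1}, the code C_t^p is a (p, p^m) complementary set: Σ_{α=0}^{p−1} C(ψ(a_t^α), ψ(a_t^α))(u) = 0 for every integer u with 0 < |u| < p^m. -/
open Finset

/-! ### Auxiliary digit lemmas -/

lemma dig_lt {p m : ℕ} (hp : 0 < p) (γ : ℕ) (j : Fin m) : dig p m γ j < p := Nat.mod_lt _ hp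

lemma dig_mul_pow_le {p m : ℕ} (γ : ℕ) (j : Fin m) : dig p m γ j * p ^ (j:ℕ) ≤ γ :=
  le_trans (Nat.mul_le_mul_right _ (Nat.mod_le _ _)) (Nat.div_mul_le_self γ _)

lemma dig_inj {p : ℕ} (hp : 1 < p) : ∀ {m γ δ : ℕ}, γ < p ^ m → δ < p ^ m →
    (∀ j : Fin m, dig p m γ j = dig p m δ j) → γ = δ := by
  intro m
  induction m with
  | zero => intro γ δ hγ hδ _; simp [pow_zero] at hγ hδ; omega
  | succ m ih =>
    intro γ δ hγ hδ h
    have h0 := h ⟨0, Nat.succ_pos m⟩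
    simp [dig] at h0
    have hd : γ / p = δ / p := by
      apply ih
      · exact Nat.div_lt_of_lt_mul (by rwa [← pow_succ'])
      · exact Nat.div_lt_of_lt_mul (by rwa [← pow_succ'])
      · intro j
        have := h j.succ
        simpa [dig, Nat.div_div_eq_div_mul, pow_succ'] using this
    calc γ = p * (γ / p) + γ % p := (Nat.div_add_mod γ p).symm
    _ = p * (δ / p) + δ % p := by rw [hd, h0]
    _ = δ := Nat.div_add_mod δ p

lemma div_mod_decomp {p : ℕ} (hp : 1 < p) {J a x b : ℕ} (k : ℕ) (ha : a < p^J) (hx : x < p) :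
    (a + x * p^J + b * p^(J+1)) / p^k % p =
      if k < J then a / p^k % p else if k = J then x else b / p^(k-J-1) % p := by
  have hp0 : 0 < p := by omega
  rcases lt_trichotomy k J with hk | hk | hk
  · rw [if_pos hk]
    obtain ⟨r, rfl⟩ : ∃ r, J = k + 1 + r := ⟨J - k - 1, by omega⟩
    have e1 : x * p^(k+1+r) + b * p^(k+1+r+1) = (p * (x * p^r + b * p^(r+1))) * p^k := by
      simp only [pow_add, pow_succ, pow_zero]; ring
    rw [add_assoc, e1, Nat.add_mul_div_right _ _ (pow_pos hp0 k),
      Nat.add_mul_mod_self_left]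
  · subst hk
    rw [if_neg (lt_irrefl _), if_pos rfl]
    have e1 : a + x * p^k + b * p^(k+1) = a + (x + b * p) * p^k := by
      rw [pow_succ]; ring
    rw [e1, Nat.add_mul_div_right _ _ (pow_pos hp0 k), Nat.div_eq_of_lt ha, zero_add,
      Nat.add_mul_mod_self_right, Nat.mod_eq_of_lt hx]
  · rw [if_neg (by omega), if_neg (by omega)]
    obtain ⟨r, rfl⟩ : ∃ r, k = J + 1 + r := ⟨k - J - 1, by omega⟩
    have hlt : a + x * p^J < p^(J+1) := by
      have h1 : x * p^J ≤ (p-1) * p^J := Nat.mul_le_mul_right _ (by omega)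
      have h2 : p^J + (p-1) * p^J = p^(J+1) := by
        rw [pow_succ]
        calc p^J + (p-1) * p^J = (1 + (p-1)) * p^J := by ring
          _ = p * p^J := by rw [show 1 + (p-1) = p by omega]
          _ = p^J * p := by ring
      omega
    have hd : (a + x * p^J + b * p^(J+1)) / p^(J+1) = b := by
      rw [Nat.add_mul_div_right _ _ (pow_pos hp0 (J+1)), Nat.div_eq_of_lt hlt, zero_add]
    have e3 : J + 1 + r - J - 1 = r := by omega
    rw [e3, show p^(J+1+r) = p^(J+1) * p^r by rw [pow_add], ← Nat.div_div_eq_div_mul, hd]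

/-- Replace the `j`-th base-`p` digit of `γ` by `x`. -/
def setDig (p m : ℕ) (γ : ℕ) (j : Fin m) (x : ℕ) : ℕ :=
  γ - dig p m γ j * p ^ (j:ℕ) + x * p ^ (j:ℕ)

private lemma sub_helper {γ A E F G : ℕ} (h : γ = A + E + F) : γ - E + G = A + G + F := by
  omega

section sd
variable {p m : ℕ} (hp : 1 < p)

lemma dig_decomp_self (γ : ℕ) (j : Fin m) :
    γ = γ % p^(j:ℕ) + dig p m γ j * p^(j:ℕ) + (γ / p^((j:ℕ)+1)) * p^((j:ℕ)+1) := by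
  have h1 : γ % p^(j:ℕ) + (γ / p^(j:ℕ)) * p^(j:ℕ) = γ := Nat.mod_add_div' γ _
  have h2 : γ / p^(j:ℕ) = dig p m γ j + p * (γ / p^((j:ℕ)+1)) := by
    rw [show dig p m γ j = γ / p^(j:ℕ) % p from rfl,
      show γ / p^((j:ℕ)+1) = γ / p^(j:ℕ) / p by rw [Nat.div_div_eq_div_mul, pow_succ]]
    exact (Nat.mod_add_div _ p).symm
  calc γ = γ % p^(j:ℕ) + (γ / p^(j:ℕ)) * p^(j:ℕ) := h1.symm
    _ = _ := by rw [h2, pow_succ]; ring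

lemma setDig_eq (γ : ℕ) (j : Fin m) (x : ℕ) :
    setDig p m γ j x
      = γ % p^(j:ℕ) + x * p^(j:ℕ) + (γ / p^((j:ℕ)+1)) * p^((j:ℕ)+1) :=
  sub_helper (dig_decomp_self γ j)

include hp in
lemma dig_setDig (γ : ℕ) (j : Fin m) {x : ℕ} (hx : x < p) (k : Fin m) :
    dig p m (setDig p m γ j x) k = if k = j then x else dig p m γ k := by
  have hmod : γ % p^(j:ℕ) < p^(j:ℕ) := Nat.mod_lt _ (pow_pos (by omega) _)
  have h1 : dig p m (setDig p m γ j x) k =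
      (if (k:ℕ) < (j:ℕ) then (γ % p^(j:ℕ)) / p^(k:ℕ) % p else if (k:ℕ) = (j:ℕ) then x
        else (γ / p^((j:ℕ)+1)) / p^((k:ℕ)-(j:ℕ)-1) % p) := by
    rw [show dig p m (setDig p m γ j x) k = setDig p m γ j x / p^(k:ℕ) % p from rfl,
      setDig_eq]
    exact div_mod_decomp hp _ hmod hx
  have h2 : dig p m γ k =
      (if (k:ℕ) < (j:ℕ) then (γ % p^(j:ℕ)) / p^(k:ℕ) % p else if (k:ℕ) = (j:ℕ) then dig p m γ j
        else (γ / p^((j:ℕ)+1)) / p^((k:ℕ)-(j:ℕ)-1) % p) := by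
    conv_lhs => rw [show dig p m γ k = γ / p^(k:ℕ) % p from rfl,
      dig_decomp_self (p := p) (m := m) γ j]
    exact div_mod_decomp hp _ hmod (Nat.mod_lt _ (by omega))
  rcases eq_or_ne k j with h | h
  · subst h
    rw [if_pos rfl, h1, if_neg (lt_irrefl _), if_pos rfl]
  · have h' : (k:ℕ) ≠ (j:ℕ) := fun hc => h (Fin.ext hc)
    rw [if_neg h, h1, h2]
    split_ifs with hA <;> simp_all

include hp in
lemma setDig_lt {γ : ℕ} (hγ : γ < p^m) (j : Fin m) {x : ℕ} (hx : x < p) :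
    setDig p m γ j x < p^m := by
  have hmod : γ % p^(j:ℕ) < p^(j:ℕ) := Nat.mod_lt _ (pow_pos (by omega) _)
  have hsd := setDig_eq (p := p) (m := m) γ j x
  have hb : γ / p^((j:ℕ)+1) < p^(m - ((j:ℕ)+1)) := by
    apply Nat.div_lt_of_lt_mul
    rw [← pow_add]
    rwa [show (j:ℕ) + 1 + (m - ((j:ℕ)+1)) = m by have := j.isLt; omega]
  have hlow : γ % p^(j:ℕ) + x * p^(j:ℕ) < p^((j:ℕ)+1) := by
    have h1 : x * p^(j:ℕ) ≤ (p-1) * p^(j:ℕ) := Nat.mul_le_mul_right _ (by omega)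
    have h2 : p^(j:ℕ) + (p-1) * p^(j:ℕ) = p^((j:ℕ)+1) := by
      rw [pow_succ]
      calc p^(j:ℕ) + (p-1) * p^(j:ℕ) = (1 + (p-1)) * p^(j:ℕ) := by ring
        _ = p * p^(j:ℕ) := by rw [show 1 + (p-1) = p by omega]
        _ = p^(j:ℕ) * p := by ring
    omega
  have hstep : setDig p m γ j x < (1 + γ / p^((j:ℕ)+1)) * p^((j:ℕ)+1) := by
    rw [hsd]; nlinarith [pow_pos (show 0 < p by omega) ((j:ℕ)+1)]
  calc setDig p m γ j x < (1 + γ / p^((j:ℕ)+1)) * p^((j:ℕ)+1) := hstep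
    _ ≤ p^(m - ((j:ℕ)+1)) * p^((j:ℕ)+1) := Nat.mul_le_mul_right _ (by omega)
    _ = p^m := by rw [← pow_add]; congr 1; have := j.isLt; omega

include hp in
lemma setDig_setDig (γ : ℕ) (j : Fin m) {x y : ℕ} (hx : x < p) :
    setDig p m (setDig p m γ j x) j y = setDig p m γ j y := by
  have h1 : dig p m (setDig p m γ j x) j = x := by rw [dig_setDig hp γ j hx, if_pos rfl]
  rw [show setDig p m (setDig p m γ j x) j y
      = setDig p m γ j x - dig p m (setDig p m γ j x) j * p^(j:ℕ) + y * p^(j:ℕ) from rfl, h1]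
  unfold setDig
  omega

lemma setDig_self (γ : ℕ) (j : Fin m) : setDig p m γ j (dig p m γ j) = γ := by
  have := dig_mul_pow_le (p := p) γ j
  unfold setDig; omega

lemma setDig_add (γ δ n : ℕ) (j : Fin m) (x : ℕ) (hγδ : γ = δ + n)
    (hdig : dig p m γ j = dig p m δ j) : setDig p m γ j x = setDig p m δ j x + n := by
  have h1 := dig_mul_pow_le (p := p) δ j
  unfold setDig
  rw [hdig]
  omega

end sd

/-! ### Roots of unity -/

lemma omg_ne_zero (lam : ℕ) : omg lam ≠ 0 := Complex.exp_ne_zero _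

lemma omg_pow_self {lam : ℕ} (h : lam ≠ 0) : omg lam ^ lam = 1 := by
  rw [omg, ← Complex.exp_nat_mul]
  rw [show (lam : ℂ) * (2 * Real.pi * Complex.I / lam) = 2 * Real.pi * Complex.I by
    have : (lam : ℂ) ≠ 0 := Nat.cast_ne_zero.mpr h
    field_simp]
  exact Complex.exp_two_pi_mul_I

lemma omg_zpow_pow {lam : ℕ} (h : lam ≠ 0) (k : ℤ) : (omg lam ^ k) ^ lam = 1 := by
  rw [← zpow_natCast (omg lam ^ k), ← zpow_mul, mul_comm, zpow_mul, zpow_natCast,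
    omg_pow_self h, one_zpow]

lemma omg_zpow_congr {lam : ℕ} (h : lam ≠ 0) {a b : ℤ} (hab : (lam : ℤ) ∣ (b - a)) :
    omg lam ^ a = omg lam ^ b := by
  obtain ⟨k, hk⟩ := hab
  have hb : b = a + lam * k := by omega
  rw [hb, zpow_add₀ (omg_ne_zero lam), zpow_mul, zpow_natCast, omg_pow_self h, one_zpow,
    mul_one]

lemma omg_conj (lam : ℕ) (z : ℤ) :
    (starRingEnd ℂ) (omg lam ^ z) = omg lam ^ (-z) := by
  have hco : (starRingEnd ℂ) (omg lam) = (omg lam)⁻¹ := by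
    rw [omg, ← Complex.exp_conj, ← Complex.exp_neg]
    congr 1
    simp [map_div₀, Complex.conj_I, map_ofNat]
    ring
  rw [map_zpow₀, hco, inv_zpow, ← zpow_neg]

lemma omg_prim (p : ℕ) (hp : p ≠ 0) : IsPrimitiveRoot (omg p) p := by
  simpa [omg] using Complex.isPrimitiveRoot_exp p hp

lemma sum_omg_zpow (p : ℕ) (hp : 0 < p) {e : ℤ} (he : ¬ (p:ℤ) ∣ e) :
    ∑ α ∈ Finset.range p, omg p ^ (e * α) = 0 := by
  have hne : omg p ^ e ≠ 1 := by
    intro hc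
    exact he (((omg_prim p hp.ne').zpow_eq_one_iff_dvd e).mp hc)
  have hh : ∀ α : ℕ, omg p ^ (e * (α:ℤ)) = (omg p ^ e) ^ α := by
    intro α; rw [zpow_mul, zpow_natCast]
  calc ∑ α ∈ Finset.range p, omg p ^ (e * α)
      = ∑ α ∈ Finset.range p, (omg p ^ e) ^ α := Finset.sum_congr rfl fun α _ => hh α
    _ = ((omg p ^ e) ^ p - 1) / (omg p ^ e - 1) := geom_sum_eq hne p
    _ = 0 := by rw [omg_zpow_pow hp.ne' e]; simp

lemma omg_pow_div {p K lam : ℕ} (hp : 0 < p) (hK : 0 < K) (h : p * K = lam) :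
    omg lam ^ (K:ℤ) = omg p := by
  have hlam : (lam:ℂ) ≠ 0 := by
    have : 0 < lam := h ▸ Nat.mul_pos hp hK
    exact Nat.cast_ne_zero.mpr this.ne'
  have hpc : (p:ℂ) ≠ 0 := Nat.cast_ne_zero.mpr hp.ne'
  rw [omg, omg, zpow_natCast, ← Complex.exp_nat_mul]
  congr 1
  have hl : (lam : ℂ) = (p:ℂ) * K := by rw [← h]; push_cast; ring
  rw [hl]
  have hKc : (K:ℂ) ≠ 0 := Nat.cast_ne_zero.mpr hK.ne'
  field_simp

/-! ### aFun pair difference -/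

set_option maxHeartbeats 1000000 in
lemma aFun_pair_diff (p m lam : ℕ) (hm : 0 < m) (π : Equiv.Perm (Fin m))
    (cf : Fin m → ZMod lam) (c : ZMod lam) (t α : ℕ)
    (v w : Fin m → ℕ) (b : ℕ) (hb1 : 1 ≤ b) (hbm : b < m)
    (hlow : ∀ (k : ℕ) (hk : k < m), k < b → v (π ⟨k, hk⟩) = w (π ⟨k, hk⟩)) (x : ℕ)
    (j0 jb : Fin m) (hj0 : (j0:ℕ) = b - 1) (hjb : (jb:ℕ) = b) :
    aFun p m lam hm π cf c t α (Function.update v (π j0) x)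
      - aFun p m lam hm π cf c t α (Function.update w (π j0) x)
      - (aFun p m lam hm π cf c t α v - aFun p m lam hm π cf c t α w)
    = ((lam / p : ℕ) : ℤ) * (((x:ℤ) - (v (π j0) : ℤ))
        * ((v (π jb) : ℤ) - (w (π jb) : ℤ))) := by
  have hj : v (π j0) = w (π j0) := by
    have := hlow (b-1) (by omega) (by omega)
    have hje : j0 = (⟨b-1, by omega⟩ : Fin m) := Fin.ext (by simp [hj0])
    rw [hje]; exact this
  have huv : ∀ (u : Fin m → ℕ) (k : Fin m),
      Function.update u (π j0) x (π k) = if k = j0 then x else u (π k) := by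
    intro u k
    rw [Function.update_apply]
    simp [EmbeddingLike.apply_eq_iff_eq]
  have huv' : ∀ (u : Fin m → ℕ) (k : Fin m),
      Function.update u (π j0) x k = if k = π j0 then x else u k := by
    intro u k; rw [Function.update_apply]
  -- quadratic part
  have hQ : (∑ β : Fin (m-1),
        (Function.update v (π j0) x (π (Fin.castLE (Nat.sub_le m 1) β)) : ℤ) *
          (Function.update v (π j0) x (π ⟨(β:ℕ)+1, by have := β.isLt; omega⟩) : ℤ))
      - (∑ β : Fin (m-1),
        (Function.update w (π j0) x (π (Fin.castLE (Nat.sub_le m 1) β)) : ℤ) *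
          (Function.update w (π j0) x (π ⟨(β:ℕ)+1, by have := β.isLt; omega⟩) : ℤ))
      - ((∑ β : Fin (m-1),
        (v (π (Fin.castLE (Nat.sub_le m 1) β)) : ℤ) *
          (v (π ⟨(β:ℕ)+1, by have := β.isLt; omega⟩) : ℤ))
        - (∑ β : Fin (m-1),
        (w (π (Fin.castLE (Nat.sub_le m 1) β)) : ℤ) *
          (w (π ⟨(β:ℕ)+1, by have := β.isLt; omega⟩) : ℤ)))
      = ((x:ℤ) - (v (π j0) : ℤ)) * ((v (π jb) : ℤ) - (w (π jb) : ℤ)) := by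
    rw [← Finset.sum_sub_distrib, ← Finset.sum_sub_distrib, ← Finset.sum_sub_distrib]
    have hbs : b - 1 < m - 1 := by omega
    rw [Fintype.sum_eq_single (⟨b-1, hbs⟩ : Fin (m-1))]
    · -- the main term
      have hl : Fin.castLE (Nat.sub_le m 1) (⟨b-1, hbs⟩ : Fin (m-1)) = j0 := by
        apply Fin.ext; simp [hj0, Fin.coe_castLE]
      have hr : (⟨((⟨b-1, hbs⟩ : Fin (m-1)):ℕ)+1, by simp only [Fin.val_mk]; omega⟩ : Fin m) = jb := by
        apply Fin.ext; simp [hjb]; omega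
      rw [hl, hr, huv v, huv v, huv w, huv w]
      rw [if_pos rfl, if_pos rfl]
      have hne : jb ≠ j0 := by
        intro hc
        rw [Fin.ext_iff, hjb, hj0] at hc
        omega
      rw [if_neg hne, if_neg hne, hj]
      ring
    · -- other terms vanish
      intro β hβ
      have hβ' : (β : ℕ) ≠ b - 1 := by
        intro hc; exact hβ (Fin.ext hc)
      have hl : (Fin.castLE (Nat.sub_le m 1) β) ≠ j0 := by
        intro hc
        rw [Fin.ext_iff, hj0] at hc
        exact hβ' (by simpa using hc)
      rw [huv v, huv v, huv w, huv w, if_neg hl, if_neg hl]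
      by_cases hr : (⟨(β:ℕ)+1, by have := β.isLt; omega⟩ : Fin m) = j0
      · have hklow : (β : ℕ) < b := by
          have : (β:ℕ) + 1 = b - 1 := by
            have := congrArg Fin.val hr
            simpa [hj0] using this
          omega
        have hveq : v (π (Fin.castLE (Nat.sub_le m 1) β)) = w (π (Fin.castLE (Nat.sub_le m 1) β)) := by
          have := hlow (β:ℕ) (by have := β.isLt; omega) hklow
          convert this using 3 <;> exact Fin.ext rfl
        rw [if_pos hr, if_pos hr, hr, hveq, hj]
        ring
      · rw [if_neg hr, if_neg hr]
        ring
  have hne0 : ∀ (u : Fin m → ℕ),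
      (Function.update u (π j0) x (π ⟨0, hm⟩) : ℤ) = if (⟨0, hm⟩ : Fin m) = j0 then (x:ℤ) else (u (π ⟨0,hm⟩) : ℤ) := by
    intro u; rw [huv u]; split_ifs <;> rfl
  have hM : (⟨m-1, by omega⟩ : Fin m) ≠ j0 := by
    intro hc
    rw [Fin.ext_iff, hj0] at hc
    simp at hc; omega
  have h0 : (Function.update v (π j0) x (π ⟨0, hm⟩) : ℤ)
        - (Function.update w (π j0) x (π ⟨0, hm⟩) : ℤ)
      - ((v (π ⟨0,hm⟩):ℤ) - (w (π ⟨0,hm⟩):ℤ)) = 0 := by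
    rw [hne0 v, hne0 w]
    by_cases hc : (⟨0,hm⟩ : Fin m) = j0
    · rw [if_pos hc, if_pos hc, hc, hj]; ring
    · rw [if_neg hc, if_neg hc]; ring
  have hMne : π (⟨m-1, by omega⟩ : Fin m) ≠ π j0 := fun hc => hM (π.injective hc)
  have hMt : (Function.update v (π j0) x (π ⟨m-1, by omega⟩) : ℤ)
        - (Function.update w (π j0) x (π ⟨m-1, by omega⟩) : ℤ)
      - ((v (π ⟨m-1, by omega⟩):ℤ) - (w (π ⟨m-1, by omega⟩):ℤ)) = 0 := by
    rw [Function.update_of_ne hMne, Function.update_of_ne hMne]; ring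
  have hLin : (∑ β : Fin m, ((cf β).val : ℤ) * (Function.update v (π j0) x β : ℤ))
      - (∑ β : Fin m, ((cf β).val : ℤ) * (Function.update w (π j0) x β : ℤ))
      - ((∑ β : Fin m, ((cf β).val : ℤ) * (v β : ℤ))
        - (∑ β : Fin m, ((cf β).val : ℤ) * (w β : ℤ))) = 0 := by
    rw [← Finset.sum_sub_distrib, ← Finset.sum_sub_distrib, ← Finset.sum_sub_distrib]
    apply Finset.sum_eq_zero
    intro k _
    rw [huv' v, huv' w]
    by_cases hc : k = π j0
    · rw [if_pos hc, if_pos hc, hc, hj]; ring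
    · rw [if_neg hc, if_neg hc]; ring
  unfold aFun fQuad
  linear_combination ((lam / p : ℕ) : ℤ) * hQ + hLin
    + ((lam / p : ℕ) : ℤ) * (α:ℤ) * h0 + ((lam / p : ℕ) : ℤ) * (t:ℤ) * hMt

/-! ### Index of first differing digit -/

open Classical in
noncomputable def bidx (p m n : ℕ) (π : Equiv.Perm (Fin m)) (i : ℕ) : ℕ :=
  if h : ∃ k, ∃ hk : k < m, dig p m (i + n) (π ⟨k, hk⟩) ≠ dig p m i (π ⟨k, hk⟩)
  then Nat.find h else 0

section bidx
variable {p m n : ℕ} {π : Equiv.Perm (Fin m)} {i : ℕ}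

open Classical in
lemma bidx_spec (h : ∃ k, ∃ hk : k < m, dig p m (i + n) (π ⟨k, hk⟩) ≠ dig p m i (π ⟨k, hk⟩)) :
    ∃ hk : bidx p m n π i < m,
      dig p m (i + n) (π ⟨bidx p m n π i, hk⟩) ≠ dig p m i (π ⟨bidx p m n π i, hk⟩) := by
  rw [bidx, dif_pos h]
  exact Nat.find_spec h

open Classical in
lemma bidx_min (h : ∃ k, ∃ hk : k < m, dig p m (i + n) (π ⟨k, hk⟩) ≠ dig p m i (π ⟨k, hk⟩))
    {k : ℕ} (hk : k < bidx p m n π i) (hkm : k < m) :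
    dig p m (i + n) (π ⟨k, hkm⟩) = dig p m i (π ⟨k, hkm⟩) := by
  rw [bidx, dif_pos h] at hk
  have := Nat.find_min h hk
  push_neg at this
  exact this hkm

lemma bidx_lt (h : ∃ k, ∃ hk : k < m, dig p m (i + n) (π ⟨k, hk⟩) ≠ dig p m i (π ⟨k, hk⟩)) :
    bidx p m n π i < m := (bidx_spec h).1

end bidx

section bidx2
variable {p m n : ℕ} {π : Equiv.Perm (Fin m)} {i i' : ℕ}

open Classical in
lemma bidx_congr
    (h : ∀ k (hk : k < m), (dig p m (i'+n) (π ⟨k,hk⟩) ≠ dig p m i' (π ⟨k,hk⟩))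
      ↔ (dig p m (i+n) (π ⟨k,hk⟩) ≠ dig p m i (π ⟨k,hk⟩))) :
    bidx p m n π i' = bidx p m n π i := by
  by_cases h1 : ∃ k, ∃ hk : k < m, dig p m (i + n) (π ⟨k, hk⟩) ≠ dig p m i (π ⟨k, hk⟩)
  · have h2 : ∃ k, ∃ hk : k < m, dig p m (i' + n) (π ⟨k, hk⟩) ≠ dig p m i' (π ⟨k, hk⟩) := by
      obtain ⟨k, hk, hne⟩ := h1
      exact ⟨k, hk, (h k hk).mpr hne⟩
    rw [bidx, bidx, dif_pos h1, dif_pos h2]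
    apply le_antisymm
    · obtain ⟨hk, hne⟩ := Nat.find_spec h1
      exact Nat.find_min' h2 ⟨hk, (h _ hk).mpr hne⟩
    · obtain ⟨hk, hne⟩ := Nat.find_spec h2
      exact Nat.find_min' h1 ⟨hk, (h _ hk).mp hne⟩
  · have h2 : ¬ ∃ k, ∃ hk : k < m, dig p m (i' + n) (π ⟨k, hk⟩) ≠ dig p m i' (π ⟨k, hk⟩) := by
      intro ⟨k, hk, hne⟩
      exact h1 ⟨k, hk, (h k hk).mp hne⟩
    rw [bidx, bidx, dif_neg h1, dif_neg h2]

lemma bidx_pos (hm : 0 < m)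
    (h : ∃ k, ∃ hk : k < m, dig p m (i + n) (π ⟨k, hk⟩) ≠ dig p m i (π ⟨k, hk⟩))
    (h0 : dig p m (i+n) (π ⟨0, hm⟩) = dig p m i (π ⟨0, hm⟩)) :
    0 < bidx p m n π i := by
  rcases Nat.eq_zero_or_pos (bidx p m n π i) with hz | hpos
  · exfalso
    obtain ⟨hk, hne⟩ := bidx_spec h
    apply hne
    have he : (⟨bidx p m n π i, hk⟩ : Fin m) = ⟨0, hm⟩ := Fin.ext (by simp [hz])
    rw [he]
    exact h0
  · exact hpos

lemma bidx_sub_one_lt (p n : ℕ) (π : Equiv.Perm (Fin m)) (i : ℕ) (hm : 0 < m) :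
    bidx p m n π i - 1 < m := by
  by_cases h : ∃ k, ∃ hk : k < m, dig p m (i + n) (π ⟨k, hk⟩) ≠ dig p m i (π ⟨k, hk⟩)
  · have := (bidx_spec h).1
    omega
  · rw [bidx, dif_neg h]
    · omega
end bidx2

/-- The position `π(b-1)` used for pairing. -/
noncomputable def jpos (p m n : ℕ) (hm : 0 < m) (π : Equiv.Perm (Fin m)) (i : ℕ) : Fin m :=
  π ⟨bidx p m n π i - 1, bidx_sub_one_lt p n π i hm⟩

/-- The pairing map. -/
noncomputable def Tmap (p m n : ℕ) (hm : 0 < m) (π : Equiv.Perm (Fin m)) (d i : ℕ) : ℕ :=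
  setDig p m i (jpos p m n hm π i) ((dig p m i (jpos p m n hm π i) + d) % p)

/-! ### Main structural fact about the pairing -/

set_option maxHeartbeats 1000000 in
lemma fact_main (p m lam : ℕ) (hp : 1 < p) (hm : 0 < m)
    (π : Equiv.Perm (Fin m)) (cf : Fin m → ZMod lam) (c : ZMod lam) (t n : ℕ)
    (hn0 : 0 < n) (i : ℕ) (hγ : i + n < p ^ m)
    (h0 : dig p m (i+n) (π ⟨0, hm⟩) = dig p m i (π ⟨0, hm⟩))
    (x : ℕ) (hx : x < p) :
    (setDig p m i (jpos p m n hm π i) x + n < p ^ m)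
    ∧ dig p m (setDig p m i (jpos p m n hm π i) x + n) (π ⟨0, hm⟩)
        = dig p m (setDig p m i (jpos p m n hm π i) x) (π ⟨0, hm⟩)
    ∧ bidx p m n π (setDig p m i (jpos p m n hm π i) x) = bidx p m n π i
    ∧ dig p m (setDig p m i (jpos p m n hm π i) x) (jpos p m n hm π i) = x
    ∧ ∀ (α : ℕ),
      (aFun p m lam hm π cf c t α (dig p m (setDig p m i (jpos p m n hm π i) x + n))
        - aFun p m lam hm π cf c t α (dig p m (setDig p m i (jpos p m n hm π i) x)))
      - (aFun p m lam hm π cf c t α (dig p m (i+n))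
        - aFun p m lam hm π cf c t α (dig p m i))
      = ((lam / p : ℕ) : ℤ) * (((x:ℤ) - (dig p m i (jpos p m n hm π i) : ℤ))
          * ((dig p m (i+n) (π ⟨bidx p m n π i % m, Nat.mod_lt _ hm⟩) : ℤ)
            - (dig p m i (π ⟨bidx p m n π i % m, Nat.mod_lt _ hm⟩) : ℤ))) := by
  have hδ : i < p ^ m := by omega
  -- there is a differing digit
  have hex : ∃ k, ∃ hk : k < m, dig p m (i + n) (π ⟨k, hk⟩) ≠ dig p m i (π ⟨k, hk⟩) := by
    by_contra hc
    push_neg at hc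
    have : i + n = i := by
      apply dig_inj hp hγ hδ
      intro j
      have := hc ((π.symm j : Fin m) : ℕ) (π.symm j).isLt
      rwa [Fin.eta, Equiv.apply_symm_apply] at this
    omega
  set b := bidx p m n π i with hbdef
  obtain ⟨hbm, hspec⟩ := bidx_spec hex
  have hb1 : 1 ≤ b := bidx_pos hm hex h0
  have hb' : b - 1 < m := bidx_sub_one_lt p n π i hm
  have hjp : jpos p m n hm π i = π ⟨b - 1, hb'⟩ := rfl
  have hjd : dig p m (i+n) (π ⟨b-1, hb'⟩) = dig p m i (π ⟨b-1, hb'⟩) :=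
    bidx_min hex (by omega) hb'
  set j : Fin m := π ⟨b - 1, hb'⟩ with hjdef
  -- setDig commutes with + n
  have P1 : setDig p m (i+n) j x = setDig p m i j x + n :=
    setDig_add (i+n) i n j x rfl hjd
  -- update description of digits
  have hupγ : dig p m (setDig p m (i+n) j x) = Function.update (dig p m (i+n)) j x := by
    funext k
    rw [dig_setDig hp _ j hx k, Function.update_apply]
  have hupδ : dig p m (setDig p m i j x) = Function.update (dig p m i) j x := by
    funext k
    rw [dig_setDig hp _ j hx k, Function.update_apply]
  have hC1 : setDig p m i j x + n < p ^ m := by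
    rw [← P1]; exact setDig_lt hp hγ j hx
  have hC2 : dig p m (setDig p m i j x + n) (π ⟨0, hm⟩)
      = dig p m (setDig p m i j x) (π ⟨0, hm⟩) := by
    rw [← P1, hupγ, hupδ, Function.update_apply, Function.update_apply]
    by_cases hc : π ⟨0, hm⟩ = j
    · rw [if_pos hc, if_pos hc]
    · rw [if_neg hc, if_neg hc]; exact h0
  have hpat : ∀ k (hk : k < m),
      (dig p m (setDig p m i j x + n) (π ⟨k, hk⟩) ≠ dig p m (setDig p m i j x) (π ⟨k, hk⟩))
      ↔ (dig p m (i+n) (π ⟨k, hk⟩) ≠ dig p m i (π ⟨k, hk⟩)) := by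
    intro k hk
    rw [← P1, hupγ, hupδ, Function.update_apply, Function.update_apply]
    by_cases hc : π ⟨k, hk⟩ = j
    · rw [if_pos hc, if_pos hc]
      have hR : dig p m (i+n) (π ⟨k, hk⟩) = dig p m i (π ⟨k, hk⟩) := by rw [hc]; exact hjd
      simp [hR]
    · rw [if_neg hc, if_neg hc]
  have hC3 : bidx p m n π (setDig p m i j x) = b := bidx_congr hpat
  have hC4 : dig p m (setDig p m i j x) j = x := by
    rw [dig_setDig hp _ j hx j, if_pos rfl]
  refine ⟨hC1, hC2, hC3, hC4, ?_⟩
  intro α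
  have hlow : ∀ (k : ℕ) (hk : k < m), k < b →
      dig p m (i+n) (π ⟨k, hk⟩) = dig p m i (π ⟨k, hk⟩) := by
    intro k hk hkb
    exact bidx_min hex hkb hk
  have hmm : b % m = b := Nat.mod_eq_of_lt hbm
  have key := aFun_pair_diff p m lam hm π cf c t α (dig p m (i+n)) (dig p m i) b hb1 hbm
    hlow x ⟨b - 1, hb'⟩ ⟨b % m, Nat.mod_lt _ hm⟩ rfl hmm
  rw [← hjdef] at key
  rw [← hupγ, ← hupδ, hjd] at key
  rw [P1] at key
  exact key

/-! ### helpers for the cyclic shift on a digit -/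

lemma mod_inv_aux1 {p o d : ℕ} (hp : 0 < p) (ho : o < p) (hd : d < p) :
    ((o + d) % p + (p - d) % p) % p = o := by
  rcases Nat.eq_zero_or_pos d with rfl | hd0
  · simp [Nat.mod_self, Nat.mod_eq_of_lt ho]
  · rw [Nat.mod_eq_of_lt (show p - d < p by omega), Nat.mod_add_mod,
      show o + d + (p - d) = o + p by omega, Nat.add_mod_right, Nat.mod_eq_of_lt ho]

lemma mod_inv_aux2 {p o d : ℕ} (hp : 0 < p) (ho : o < p) (hd : d < p) :
    ((o + (p - d) % p) % p + d) % p = o := by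
  rcases Nat.eq_zero_or_pos d with rfl | hd0
  · simp [Nat.mod_eq_of_lt ho]
  · rw [Nat.mod_eq_of_lt (show p - d < p by omega), Nat.mod_add_mod,
      show o + (p - d) + d = o + p by omega, Nat.add_mod_right, Nat.mod_eq_of_lt ho]

lemma exists_diff_digit (p m n : ℕ) (hp : 1 < p) (hn0 : 0 < n)
    (π : Equiv.Perm (Fin m)) (i : ℕ) (hγ : i + n < p ^ m) :
    ∃ k, ∃ hk : k < m, dig p m (i + n) (π ⟨k, hk⟩) ≠ dig p m i (π ⟨k, hk⟩) := by
  by_contra hc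
  push_neg at hc
  have : i + n = i := by
    apply dig_inj hp hγ (by omega)
    intro j
    have := hc ((π.symm j : Fin m) : ℕ) (π.symm j).isLt
    rwa [Fin.eta, Equiv.apply_symm_apply] at this
  omega

/-! ### The sum over the Golay pairs vanishes -/

set_option maxHeartbeats 2000000 in
lemma pair_sum (p m lam : ℕ) (hp : p.Prime) (hm : 0 < m)
    (hdvd : p ∣ lam) (hlam : 0 < lam)
    (π : Equiv.Perm (Fin m)) (cf : Fin m → ZMod lam) (c : ZMod lam) (t n : ℕ)
    (hn0 : 0 < n) (hn : n < p ^ m) :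
    ∑ i ∈ (Finset.range (p ^ m - n)).filter
        (fun i => dig p m (i+n) (π ⟨0, hm⟩) = dig p m i (π ⟨0, hm⟩)),
      omg lam ^ (aFun p m lam hm π cf c t 0 (dig p m (i+n))
        - aFun p m lam hm π cf c t 0 (dig p m i)) = 0 := by
  have hp1 : 1 < p := hp.one_lt
  have hK : p * (lam / p) = lam := Nat.mul_div_cancel' hdvd
  have hKpos : 0 < lam / p := Nat.div_pos (Nat.le_of_dvd hlam hdvd) hp.pos
  set S := (Finset.range (p ^ m - n)).filter
      (fun i => dig p m (i+n) (π ⟨0, hm⟩) = dig p m i (π ⟨0, hm⟩)) with hS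
  set D : ℕ → ℤ := fun i => aFun p m lam hm π cf c t 0 (dig p m (i+n))
      - aFun p m lam hm π cf c t 0 (dig p m i) with hD
  set ep : ℕ → ℤ := fun i =>
      (dig p m (i+n) (π ⟨bidx p m n π i % m, Nat.mod_lt _ hm⟩) : ℤ)
        - (dig p m i (π ⟨bidx p m n π i % m, Nat.mod_lt _ hm⟩) : ℤ) with hep
  -- membership facts
  have hmem : ∀ i ∈ S, i + n < p ^ m ∧
      dig p m (i+n) (π ⟨0, hm⟩) = dig p m i (π ⟨0, hm⟩) := by
    intro i hi
    rw [hS, Finset.mem_filter, Finset.mem_range] at hi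
    exact ⟨by omega, hi.2⟩
  -- main facts about the pairing map
  have hT : ∀ i ∈ S, ∀ d : ℕ, Tmap p m n hm π d i ∈ S ∧
      ((lam:ℤ) ∣ (D (Tmap p m n hm π d i)
        - (D i + ((lam / p : ℕ) : ℤ) * (ep i * (d:ℤ))))) ∧
      bidx p m n π (Tmap p m n hm π d i) = bidx p m n π i ∧
      dig p m (Tmap p m n hm π d i) (jpos p m n hm π i)
        = (dig p m i (jpos p m n hm π i) + d) % p := by
    intro i hi d
    obtain ⟨hγ, h0⟩ := hmem i hi
    set o := dig p m i (jpos p m n hm π i) with ho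
    have hop : o < p := dig_lt hp.pos i _
    have hxlt : (o + d) % p < p := Nat.mod_lt _ hp.pos
    obtain ⟨F1, F2, F3, F4, F5⟩ := fact_main p m lam hp1 hm π cf c t n hn0 i hγ h0
      ((o + d) % p) hxlt
    have hTm : Tmap p m n hm π d i = setDig p m i (jpos p m n hm π i) ((o + d) % p) := rfl
    refine ⟨?_, ?_, ?_, ?_⟩
    · rw [hTm, hS, Finset.mem_filter, Finset.mem_range]
      exact ⟨by omega, F2⟩
    · -- divisibility
      have h5 := F5 0
      have hDT : D (Tmap p m n hm π d i) - D i
          = ((lam / p : ℕ) : ℤ) * (((((o + d) % p : ℕ) : ℤ) - (o:ℤ)) * ep i) := by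
        simp only [hD, hep, hTm]
        exact h5
      obtain ⟨y, hy⟩ : ∃ y : ℕ, (((o+d) % p : ℕ) : ℤ) - (o:ℤ) - (d:ℤ) = -((p:ℤ) * y) := by
        refine ⟨(o + d) / p, ?_⟩
        have h' : (((o + d) % p : ℕ) : ℤ) + (p:ℤ) * (((o + d) / p : ℕ) : ℤ)
            = (o:ℤ) + (d:ℤ) := by exact_mod_cast Nat.mod_add_div (o + d) p
        linarith [h']
      refine ⟨-(ep i * y), ?_⟩
      have hKl : ((p:ℕ):ℤ) * ((lam / p : ℕ):ℤ) = (lam:ℤ) := by exact_mod_cast hK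
      rw [← hKl]
      linear_combination hDT + ((lam / p : ℕ):ℤ) * (ep i) * hy
    · rw [hTm]; exact F3
    · rw [hTm]; exact F4
  -- inverse properties
  have hjq : ∀ i ∈ S, ∀ d : ℕ,
      jpos p m n hm π (Tmap p m n hm π d i) = jpos p m n hm π i := by
    intro i hi d
    unfold jpos
    congr 1
    exact Fin.ext (by simp [(hT i hi d).2.2.1])
  have hinv1 : ∀ d, d < p → ∀ i ∈ S,
      Tmap p m n hm π ((p - d) % p) (Tmap p m n hm π d i) = i := by
    intro d hd i hi
    have h1 := hT i hi d
    set o := dig p m i (jpos p m n hm π i) with ho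
    have hop : o < p := dig_lt hp.pos i _
    have hxlt : (o + d) % p < p := Nat.mod_lt _ hp.pos
    rw [show Tmap p m n hm π ((p - d) % p) (Tmap p m n hm π d i)
        = setDig p m (Tmap p m n hm π d i) (jpos p m n hm π (Tmap p m n hm π d i))
          ((dig p m (Tmap p m n hm π d i) (jpos p m n hm π (Tmap p m n hm π d i))
            + (p - d) % p) % p) from rfl, hjq i hi d, h1.2.2.2,
      mod_inv_aux1 hp.pos hop hd,
      show Tmap p m n hm π d i = setDig p m i (jpos p m n hm π i) ((o + d) % p) from rfl,
      setDig_setDig hp1 _ _ hxlt, ho, setDig_self]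
  have hinv2 : ∀ d, d < p → ∀ i ∈ S,
      Tmap p m n hm π d (Tmap p m n hm π ((p - d) % p) i) = i := by
    intro d hd i hi
    have h1 := hT i hi ((p - d) % p)
    set o := dig p m i (jpos p m n hm π i) with ho
    have hop : o < p := dig_lt hp.pos i _
    have hxlt : (o + (p - d) % p) % p < p := Nat.mod_lt _ hp.pos
    rw [show Tmap p m n hm π d (Tmap p m n hm π ((p - d) % p) i)
        = setDig p m (Tmap p m n hm π ((p - d) % p) i)
            (jpos p m n hm π (Tmap p m n hm π ((p - d) % p) i))
            ((dig p m (Tmap p m n hm π ((p - d) % p) i)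
              (jpos p m n hm π (Tmap p m n hm π ((p - d) % p) i)) + d) % p) from rfl,
      hjq i hi _, h1.2.2.2, mod_inv_aux2 hp.pos hop hd,
      show Tmap p m n hm π ((p - d) % p) i
        = setDig p m i (jpos p m n hm π i) ((o + (p - d) % p) % p) from rfl,
      setDig_setDig hp1 _ _ hxlt, ho, setDig_self]
  -- reindexing
  have hstep : ∀ d, d < p →
      ∑ i ∈ S, omg lam ^ (D (Tmap p m n hm π d i)) = ∑ i ∈ S, omg lam ^ (D i) := by
    intro d hd
    refine Finset.sum_nbij' (Tmap p m n hm π d) (Tmap p m n hm π ((p - d) % p))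
      (fun a ha => (hT a ha d).1)
      (fun a ha => (hT a ha ((p - d) % p)).1)
      (hinv1 d hd) (hinv2 d hd) (fun a _ => rfl)
  -- exponent relation
  have hcongr : ∀ i ∈ S, ∀ d : ℕ,
      omg lam ^ (D (Tmap p m n hm π d i)) = omg lam ^ (D i) * omg p ^ (ep i * (d:ℤ)) := by
    intro i hi d
    have hdv := (hT i hi d).2.1
    rw [← omg_zpow_congr hlam.ne' hdv, zpow_add₀ (omg_ne_zero lam), zpow_mul,
      omg_pow_div hp.pos hKpos hK]
  -- the inner geometric sum vanishes
  have hnd : ∀ i ∈ S, ¬ ((p:ℤ) ∣ ep i) := by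
    intro i hi hdvd'
    obtain ⟨hγ, h0⟩ := hmem i hi
    have hex := exists_diff_digit p m n hp1 hn0 π i hγ
    obtain ⟨hbm, hspec⟩ := bidx_spec hex
    have hfe : (⟨bidx p m n π i % m, Nat.mod_lt _ hm⟩ : Fin m)
        = ⟨bidx p m n π i, hbm⟩ := Fin.ext (by simp [Nat.mod_eq_of_lt hbm])
    have hne : ep i ≠ 0 := by
      simp only [hep, hfe]
      intro hc
      apply hspec
      have := sub_eq_zero.mp hc
      exact_mod_cast this
    have h1 : dig p m (i+n) (π ⟨bidx p m n π i % m, Nat.mod_lt _ hm⟩) < p :=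
      dig_lt hp.pos _ _
    have h2 : dig p m i (π ⟨bidx p m n π i % m, Nat.mod_lt _ hm⟩) < p :=
      dig_lt hp.pos _ _
    have habs : (ep i).natAbs < p := by
      simp only [hep]
      omega
    have := Int.eq_zero_of_dvd_of_natAbs_lt_natAbs hdvd' (by simpa using habs)
    exact hne this
  have hzero : ∀ i ∈ S, ∑ d ∈ Finset.range p, omg p ^ (ep i * (d:ℤ)) = 0 :=
    fun i hi => sum_omg_zpow p hp.pos (hnd i hi)
  -- final assembly
  have hPne : (p:ℂ) ≠ 0 := Nat.cast_ne_zero.mpr hp.pos.ne'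
  have hfin : (p:ℂ) * ∑ i ∈ S, omg lam ^ (D i) = 0 := by
    calc (p:ℂ) * ∑ i ∈ S, omg lam ^ (D i)
        = ∑ _d ∈ Finset.range p, ∑ i ∈ S, omg lam ^ (D i) := by
          rw [Finset.sum_const, Finset.card_range, nsmul_eq_mul]
      _ = ∑ d ∈ Finset.range p, ∑ i ∈ S, omg lam ^ (D i) * omg p ^ (ep i * (d:ℤ)) := by
          refine Finset.sum_congr rfl fun d hd => ?_
          rw [← hstep d (Finset.mem_range.mp hd)]
          exact Finset.sum_congr rfl fun i hi => hcongr i hi d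
      _ = ∑ i ∈ S, ∑ d ∈ Finset.range p, omg lam ^ (D i) * omg p ^ (ep i * (d:ℤ)) :=
          Finset.sum_comm
      _ = ∑ i ∈ S, omg lam ^ (D i) * ∑ d ∈ Finset.range p, omg p ^ (ep i * (d:ℤ)) := by
          refine Finset.sum_congr rfl fun i _ => ?_
          rw [Finset.mul_sum]
      _ = 0 := Finset.sum_eq_zero fun i hi => by rw [hzero i hi, mul_zero]
  exact (mul_eq_zero.mp hfin).resolve_left hPne

/-! ### Reduction of the correlation sum -/

set_option maxHeartbeats 1000000 in
lemma key_sum (p m lam : ℕ) (hp : p.Prime) (hm : 0 < m) (hdvd : p ∣ lam) (hlam : 0 < lam)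
    (π : Equiv.Perm (Fin m)) (cf : Fin m → ZMod lam) (c : ZMod lam) (t n : ℕ)
    (hn0 : 0 < n) (hn : n < p ^ m) :
    ∑ α ∈ Finset.range p, ∑ i ∈ Finset.range (p ^ m - n),
      omg lam ^ (aFun p m lam hm π cf c t α (dig p m (i + n)))
        * (starRingEnd ℂ) (omg lam ^ (aFun p m lam hm π cf c t α (dig p m i))) = 0 := by
  have hp1 : 1 < p := hp.one_lt
  have hK : p * (lam / p) = lam := Nat.mul_div_cancel' hdvd
  have hKpos : 0 < lam / p := Nat.div_pos (Nat.le_of_dvd hlam hdvd) hp.pos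
  rw [Finset.sum_comm]
  have hterm : ∀ i ∈ Finset.range (p ^ m - n),
      (∑ α ∈ Finset.range p,
        omg lam ^ (aFun p m lam hm π cf c t α (dig p m (i + n)))
          * (starRingEnd ℂ) (omg lam ^ (aFun p m lam hm π cf c t α (dig p m i))))
      = if dig p m (i+n) (π ⟨0, hm⟩) = dig p m i (π ⟨0, hm⟩)
        then (p:ℂ) * omg lam ^ (aFun p m lam hm π cf c t 0 (dig p m (i+n))
          - aFun p m lam hm π cf c t 0 (dig p m i))
        else 0 := by
    intro i _
    set e : ℤ := (dig p m (i+n) (π ⟨0, hm⟩) : ℤ) - (dig p m i (π ⟨0, hm⟩) : ℤ) with hedef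
    have hsplit : ∀ α : ℕ,
        omg lam ^ (aFun p m lam hm π cf c t α (dig p m (i + n)))
          * (starRingEnd ℂ) (omg lam ^ (aFun p m lam hm π cf c t α (dig p m i)))
        = omg lam ^ (aFun p m lam hm π cf c t 0 (dig p m (i+n))
            - aFun p m lam hm π cf c t 0 (dig p m i)) * omg p ^ (e * (α:ℤ)) := by
      intro α
      rw [omg_conj, ← zpow_add₀ (omg_ne_zero lam)]
      have hAs : aFun p m lam hm π cf c t α (dig p m (i + n))
            + -(aFun p m lam hm π cf c t α (dig p m i))
          = (aFun p m lam hm π cf c t 0 (dig p m (i+n))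
            - aFun p m lam hm π cf c t 0 (dig p m i)) + ((lam / p : ℕ):ℤ) * (e * (α:ℤ)) := by
        simp only [aFun, hedef]
        push_cast
        ring
      rw [hAs, zpow_add₀ (omg_ne_zero lam), zpow_mul, omg_pow_div hp.pos hKpos hK]
    rw [Finset.sum_congr rfl (fun α _ => hsplit α), ← Finset.mul_sum]
    by_cases hcond : dig p m (i+n) (π ⟨0, hm⟩) = dig p m i (π ⟨0, hm⟩)
    · rw [if_pos hcond]
      have he0 : e = 0 := by rw [hedef, hcond]; ring
      rw [he0]
      simp only [zero_mul, zpow_zero, Finset.sum_const, Finset.card_range, nsmul_eq_mul,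
        mul_one]
      ring
    · rw [if_neg hcond]
      have hne : ¬ ((p:ℤ) ∣ e) := by
        intro hdv
        have h1 : dig p m (i+n) (π ⟨0, hm⟩) < p := dig_lt hp.pos _ _
        have h2 : dig p m i (π ⟨0, hm⟩) < p := dig_lt hp.pos _ _
        have he' : e ≠ 0 := by
          rw [hedef]
          intro hc
          exact hcond (by exact_mod_cast sub_eq_zero.mp hc)
        have habs : e.natAbs < p := by rw [hedef]; omega
        exact he' (Int.eq_zero_of_dvd_of_natAbs_lt_natAbs hdv (by simpa using habs))
      rw [sum_omg_zpow p hp.pos hne, mul_zero]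
  rw [Finset.sum_congr rfl hterm, ← Finset.sum_filter, ← Finset.mul_sum,
    pair_sum p m lam hp hm hdvd hlam π cf c t n hn0 hn, mul_zero]


/-- each code `C_t^p` is a `(p, p^m)` complementary set:
the auto-correlation sum of its rows vanishes for all `0 < |u| < p^m`. -/
theorem statement1 (p : ℕ) (hp : p.Prime) (m : ℕ) (hm : 0 < m) (q : ℕ) (hq : 0 < q)
    (π : Equiv.Perm (Fin m)) (cf : Fin m → ZMod (Nat.lcm p q)) (c : ZMod (Nat.lcm p q))
    (t : ℕ) (ht : t < p) (u : ℤ) (hu0 : u ≠ 0) (hu : u.natAbs < p ^ m) :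
    codeCorr p (p ^ m) (codeC p m (Nat.lcm p q) hm π cf c t)
        (codeC p m (Nat.lcm p q) hm π cf c t) u = 0 := by
  have hdvd : p ∣ Nat.lcm p q := Nat.dvd_lcm_left p q
  have hlam : 0 < Nat.lcm p q :=
    Nat.pos_of_ne_zero (Nat.lcm_ne_zero hp.pos.ne' hq.ne')
  rcases lt_or_gt_of_ne hu0 with hneg | hpos
  · -- u < 0
    set n : ℕ := (-u).toNat with hndef
    have hn0 : 0 < n := by omega
    have hn : n < p ^ m := by omega
    have hmain := key_sum p m (Nat.lcm p q) hp hm hdvd hlam π cf c t n hn0 hn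
    rw [codeCorr]
    have haux : ∀ ν, aCorr (p ^ m) (codeC p m (Nat.lcm p q) hm π cf c t ν)
        (codeC p m (Nat.lcm p q) hm π cf c t ν) u
        = ∑ i ∈ Finset.range (p ^ m - n),
            codeC p m (Nat.lcm p q) hm π cf c t ν i
              * (starRingEnd ℂ) (codeC p m (Nat.lcm p q) hm π cf c t ν (i + n)) := by
      intro ν
      rw [aCorr, if_neg (by omega)]
    rw [Finset.sum_congr rfl (fun ν _ => haux ν)]
    have hflip : ∑ ν ∈ Finset.range p, ∑ i ∈ Finset.range (p ^ m - n),
          codeC p m (Nat.lcm p q) hm π cf c t ν i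
            * (starRingEnd ℂ) (codeC p m (Nat.lcm p q) hm π cf c t ν (i + n))
        = (starRingEnd ℂ) (∑ ν ∈ Finset.range p, ∑ i ∈ Finset.range (p ^ m - n),
            codeC p m (Nat.lcm p q) hm π cf c t ν (i + n)
              * (starRingEnd ℂ) (codeC p m (Nat.lcm p q) hm π cf c t ν i)) := by
      rw [map_sum]
      refine Finset.sum_congr rfl fun ν _ => ?_
      rw [map_sum]
      refine Finset.sum_congr rfl fun i _ => ?_
      rw [map_mul, Complex.conj_conj]
      ring
    rw [hflip]
    have : ∑ ν ∈ Finset.range p, ∑ i ∈ Finset.range (p ^ m - n),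
        codeC p m (Nat.lcm p q) hm π cf c t ν (i + n)
          * (starRingEnd ℂ) (codeC p m (Nat.lcm p q) hm π cf c t ν i) = 0 := by
      simp only [codeC]
      exact hmain
    rw [this, map_zero]
  · -- u > 0
    set n : ℕ := u.toNat with hndef
    have hn0 : 0 < n := by omega
    have hn : n < p ^ m := by omega
    have hmain := key_sum p m (Nat.lcm p q) hp hm hdvd hlam π cf c t n hn0 hn
    rw [codeCorr]
    have haux : ∀ ν, aCorr (p ^ m) (codeC p m (Nat.lcm p q) hm π cf c t ν)
        (codeC p m (Nat.lcm p q) hm π cf c t ν) u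
        = ∑ i ∈ Finset.range (p ^ m - n),
            codeC p m (Nat.lcm p q) hm π cf c t ν (i + n)
              * (starRingEnd ℂ) (codeC p m (Nat.lcm p q) hm π cf c t ν i) := by
      intro ν
      rw [aCorr, if_pos (by omega)]
    rw [Finset.sum_congr rfl (fun ν _ => haux ν)]
    simp only [codeC]
    exact hmain
end

section
/- With p prime, m ≥ 1, q ≥ 1, λ = lcm(p,q), π a permutation of {1,…,m}, c_1,…,c_m, c ∈ Z_λ as in the construction, for all t, t' ∈ {0,…,p−1} the zero-shift correlation satisfies C(C_t^p, C_{t'}^p)(0) = Σ_{α=0}^{p−1} Σ_{γ=0}^{p^m−1} ω_λ^{a_t^α(γ_1,…,γ_m) − a_{t'}^α(γ_1,…,γ_m)} = p^{m+1} if t = t' and 0 if t ≠ t'. -/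
open Finset

lemma conj_omg (lam : ℕ) : (starRingEnd ℂ) (omg lam) = (omg lam)⁻¹ := by
  rw [omg, ← Complex.exp_conj, ← Complex.exp_neg]
  congr 1
  rw [map_div₀, map_mul, map_mul, Complex.conj_I, Complex.conj_ofNat, Complex.conj_ofReal,
    map_natCast]
  ring

lemma sum_range_mul' (M N : ℕ) (f : ℕ → ℂ) :
    ∑ γ ∈ range (M * N), f γ = ∑ i ∈ range M, ∑ r ∈ range N, f (i * N + r) := by
  induction M with
  | zero => simp
  | succ M ih => rw [Nat.succ_mul, Finset.sum_range_add, ih, Finset.sum_range_succ]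

lemma sum_dig (p : ℕ) (hp : 0 < p) (m j : ℕ) (hj : j < m) (g : ℕ → ℂ) :
    ∑ γ ∈ range (p ^ m), g (γ / p ^ j % p) = (p : ℂ) ^ (m - 1) * ∑ d ∈ range p, g d := by
  have h1 : p ^ m = (p ^ (m - j - 1) * p) * p ^ j := by
    rw [mul_assoc, ← pow_succ', ← pow_add]; congr 1; omega
  rw [h1, sum_range_mul']
  have key : ∀ i ∈ range (p ^ (m - j - 1) * p), (∑ r ∈ range (p ^ j), g ((i * p ^ j + r) / p ^ j % p))
      = (p : ℂ) ^ j * g (i % p) := by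
    intro i _
    have : ∀ r ∈ range (p ^ j), g ((i * p ^ j + r) / p ^ j % p) = g (i % p) := by
      intro r hr
      rw [mul_comm i, Nat.mul_add_div (pow_pos hp j), Nat.div_eq_of_lt (mem_range.mp hr), add_zero]
    rw [Finset.sum_congr rfl this, Finset.sum_const, card_range, nsmul_eq_mul]
    push_cast; ring
  rw [Finset.sum_congr rfl key, ← Finset.mul_sum, sum_range_mul']
  have key2 : ∀ a ∈ range (p ^ (m - j - 1)), (∑ d ∈ range p, g ((a * p + d) % p)) = ∑ d ∈ range p, g d := by
    intro a _
    refine Finset.sum_congr rfl fun d hd => ?_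
    rw [mul_comm a, Nat.mul_add_mod, Nat.mod_eq_of_lt (mem_range.mp hd)]
  rw [Finset.sum_congr rfl key2, Finset.sum_const, card_range, nsmul_eq_mul, ← mul_assoc]
  congr 1
  rw [mul_comm ((p:ℂ)^j)]
  push_cast
  rw [← pow_add]
  congr 1
  omega

/-- the zero-shift correlation `C(C_t^p, C_{t'}^p)(0)` equals the double
exponential sum `Σ_α Σ_γ ω_λ^{a_t^α(γ) - a_{t'}^α(γ)}`, which is `p^{m+1}` if `t = t'`
and `0` otherwise. -/
theorem statement2 (p : ℕ) (hp : p.Prime) (m : ℕ) (hm : 0 < m) (q : ℕ) (hq : 0 < q)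
    (π : Equiv.Perm (Fin m)) (cf : Fin m → ZMod (Nat.lcm p q)) (c : ZMod (Nat.lcm p q))
    (t t' : ℕ) (ht : t < p) (ht' : t' < p) :
    codeCorr p (p ^ m) (codeC p m (Nat.lcm p q) hm π cf c t)
        (codeC p m (Nat.lcm p q) hm π cf c t') 0 =
      (∑ α ∈ Finset.range p, ∑ γ ∈ Finset.range (p ^ m),
        omg (Nat.lcm p q) ^
          (aFun p m (Nat.lcm p q) hm π cf c t α (dig p m γ)
            - aFun p m (Nat.lcm p q) hm π cf c t' α (dig p m γ))) ∧
    (∑ α ∈ Finset.range p, ∑ γ ∈ Finset.range (p ^ m),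
        omg (Nat.lcm p q) ^
          (aFun p m (Nat.lcm p q) hm π cf c t α (dig p m γ)
            - aFun p m (Nat.lcm p q) hm π cf c t' α (dig p m γ))) =
      (if t = t' then (p : ℂ) ^ (m + 1) else 0) := by
  have hp0 : 0 < p := hp.pos
  constructor
  · unfold codeCorr aCorr codeC
    simp only [le_refl, if_true, Int.toNat_zero, Nat.sub_zero, add_zero]
    refine Finset.sum_congr rfl fun α _ => Finset.sum_congr rfl fun γ _ => ?_
    rw [map_zpow₀, conj_omg, inv_zpow, ← zpow_neg, ← zpow_add₀ (omg_ne_zero _),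
      ← sub_eq_add_neg]
  · have hdiff : ∀ (α γ : ℕ),
        aFun p m (Nat.lcm p q) hm π cf c t α (dig p m γ)
          - aFun p m (Nat.lcm p q) hm π cf c t' α (dig p m γ)
          = ((Nat.lcm p q / p : ℕ) : ℤ)
              * (((t : ℤ) - (t' : ℤ)) * (dig p m γ (π ⟨m - 1, by omega⟩) : ℤ)) := by
      intro α γ
      simp only [aFun]
      ring
    by_cases htt : t = t'
    · subst htt
      simp only [if_pos rfl, sub_self, zpow_zero, Finset.sum_const, Finset.card_range,
        nsmul_eq_mul, mul_one]
      push_cast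
      ring
    · rw [if_neg htt]
      have hprim : IsPrimitiveRoot (Complex.exp (2 * Real.pi * Complex.I / p)) p :=
        Complex.isPrimitiveRoot_exp p hp0.ne'
      set ζ : ℂ := Complex.exp (2 * Real.pi * Complex.I / p) with hζ
      set k : ℤ := (t : ℤ) - (t' : ℤ) with hk
      have hζk : ζ ^ k ≠ 1 := by
        intro h
        have hdvd : (p : ℤ) ∣ k := (hprim.zpow_eq_one_iff_dvd k).mp h
        have habs : |k| < (p : ℤ) := by
          rw [hk, abs_sub_lt_iff]
          omega
        have h0 := Int.eq_zero_of_abs_lt_dvd hdvd habs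
        rw [hk] at h0
        omega
      have homg : omg (Nat.lcm p q) ^ ((Nat.lcm p q / p : ℕ) : ℤ) = ζ := by
        rw [zpow_natCast, omg, ← Complex.exp_nat_mul, hζ]
        congr 1
        have hlam0 : ((Nat.lcm p q : ℕ) : ℂ) ≠ 0 := by
          have : 0 < Nat.lcm p q := Nat.lcm_pos hp0 hq
          exact_mod_cast this.ne'
        have hpc : (p : ℂ) ≠ 0 := by exact_mod_cast hp0.ne'
        have hmul : ((Nat.lcm p q / p : ℕ) : ℂ) * (p : ℂ) = ((Nat.lcm p q : ℕ) : ℂ) := by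
          have := Nat.div_mul_cancel (Nat.dvd_lcm_left p q)
          exact_mod_cast congrArg (Nat.cast : ℕ → ℂ) this
        field_simp
        linear_combination hmul
      have hterm : ∀ (α γ : ℕ),
          omg (Nat.lcm p q) ^ (aFun p m (Nat.lcm p q) hm π cf c t α (dig p m γ)
            - aFun p m (Nat.lcm p q) hm π cf c t' α (dig p m γ))
          = (ζ ^ k) ^ (γ / p ^ ((π ⟨m - 1, by omega⟩ : Fin m) : ℕ) % p) := by
        intro α γ
        rw [hdiff, zpow_mul, homg, zpow_mul, zpow_natCast]
        rfl
      have hgeom : ∑ d ∈ Finset.range p, (ζ ^ k) ^ d = 0 := by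
        rw [geom_sum_eq hζk]
        have h1 : (ζ ^ k) ^ p = 1 := by
          rw [← zpow_natCast (ζ ^ k), ← zpow_mul, mul_comm, zpow_mul, zpow_natCast,
            hprim.pow_eq_one, one_zpow]
        rw [h1, sub_self, zero_div]
      rw [Finset.sum_congr rfl fun α _ => Finset.sum_congr rfl fun γ _ => hterm α γ]
      rw [Finset.sum_congr rfl fun α (_ : α ∈ Finset.range p) =>
        sum_dig p hp0 m _ (π ⟨m - 1, by omega⟩).isLt (fun d => (ζ ^ k) ^ d)]
      simp [hgeom]
end

section
/- With p prime, m ≥ 1, q ≥ 1, λ = lcm(p,q), π a permutation of {1,…,m}, c_1,…,c_m ∈ Z_λ as in the construction, let 2 ≤ v ≤ m and let γ, δ ∈ {0,…,p−1}^m be digit vectors with γ_{π(j)} = δ_{π(j)} for all 1 ≤ j < v. For k ∈ {1,…,p−1}, let γ^k (respectively δ^k) denote the digit vector obtained from γ (respectively δ) by replacing the entry at position π(v−1) with γ_{π(v−1)} − k mod p (respectively δ_{π(v−1)} − k mod p). Then f(γ^k) − f(δ^k) − (f(γ) − f(δ)) ≡ (λ/p)·k·(δ_{π(v)} − γ_{π(v)})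 (mod λ). -/
open Finset

set_option maxHeartbeats 8000000 in
lemma fQuad_update_diff (p m lam : ℕ) (π : Equiv.Perm (Fin m)) (cf : Fin m → ZMod lam)
    (x : Fin m → ℕ) (i : ℕ) (hi : i + 1 < m) (w : ℕ) :
    fQuad p m lam π cf (Function.update x (π ⟨i, by omega⟩) w) - fQuad p m lam π cf x
    = ((lam / p : ℕ) : ℤ) * (((w:ℤ) - (x (π ⟨i, by omega⟩) : ℤ)) * (x (π ⟨i+1, hi⟩) : ℤ))
      + ((lam / p : ℕ) : ℤ) *
        ((if h : 0 < i then (x (π ⟨i-1, by omega⟩) : ℤ) else 0) *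
          ((w:ℤ) - (x (π ⟨i, by omega⟩) : ℤ)))
      + ((cf (π ⟨i, by omega⟩)).val : ℤ) * ((w:ℤ) - (x (π ⟨i, by omega⟩) : ℤ)) := by
  obtain ⟨j0, hj0⟩ : ∃ j0, j0 = π (⟨i, by omega⟩ : Fin m) := ⟨_, rfl⟩
  rw [← hj0]
  have hupd : ∀ a : Fin m, (Function.update x j0 w a : ℤ)
      = if a = j0 then (w:ℤ) else (x a : ℤ) := by
    intro a
    by_cases h : a = j0
    · subst h; rw [if_pos rfl, Function.update_self]
    · rw [if_neg h, Function.update_of_ne h]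
  have hπeq : ∀ a : Fin m, (π a = j0) ↔ ((a : ℕ) = i) := by
    intro a
    rw [hj0, π.injective.eq_iff, Fin.ext_iff]
  unfold fQuad
  rw [show ∀ A B C D : ℤ, ((lam / p : ℕ) : ℤ) * A + B - (((lam / p : ℕ) : ℤ) * C + D)
      = ((lam / p : ℕ) : ℤ) * (A - C) + (B - D) by intros; ring]
  rw [← Finset.sum_sub_distrib, ← Finset.sum_sub_distrib]
  have hquad : ∑ β : Fin (m-1),
      ((Function.update x j0 w (π (Fin.castLE (Nat.sub_le m 1) β)) : ℤ) *
        (Function.update x j0 w (π ⟨(β : ℕ) + 1, by have := β.isLt; omega⟩) : ℤ)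
       - (x (π (Fin.castLE (Nat.sub_le m 1) β)) : ℤ) *
        (x (π ⟨(β : ℕ) + 1, by have := β.isLt; omega⟩) : ℤ))
      = ∑ β : Fin (m-1),
        ((if (β : ℕ) = i then ((w:ℤ) - (x j0 : ℤ)) * (x (π ⟨i+1, hi⟩) : ℤ) else 0)
         + (if (β : ℕ) + 1 = i then (x (π (Fin.castLE (Nat.sub_le m 1) β)) : ℤ) * ((w:ℤ) - (x j0 : ℤ)) else 0)) := by
    apply Finset.sum_congr rfl
    intro β _
    rw [hupd, hupd]
    by_cases h1 : (β : ℕ) = i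
    · have h2 : ¬ ((β : ℕ) + 1 = i) := by omega
      have e1 : π (Fin.castLE (Nat.sub_le m 1) β) = j0 := by
        rw [hπeq]; exact h1
      have e2 : ¬ π ⟨(β : ℕ) + 1, by have := β.isLt; omega⟩ = j0 := by
        rw [hπeq]; simpa using h2
      have e3 : (⟨(β:ℕ)+1, by have := β.isLt; omega⟩ : Fin m) = ⟨i+1, hi⟩ := by
        exact Fin.ext (by simp [h1])
      rw [if_pos e1, if_neg e2, if_pos h1, if_neg h2, e1, e3]
      ring
    · by_cases h2 : (β : ℕ) + 1 = i
      · have e1 : ¬ π (Fin.castLE (Nat.sub_le m 1) β) = j0 := by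
          rw [hπeq]; simpa using h1
        have e2 : π ⟨(β : ℕ) + 1, by have := β.isLt; omega⟩ = j0 := by
          rw [hπeq]; exact h2
        rw [if_neg e1, if_pos e2, if_neg h1, if_pos h2, e2]
        ring
      · have e1 : ¬ π (Fin.castLE (Nat.sub_le m 1) β) = j0 := by
          rw [hπeq]; simpa using h1
        have e2 : ¬ π ⟨(β : ℕ) + 1, by have := β.isLt; omega⟩ = j0 := by
          rw [hπeq]; simpa using h2
        rw [if_neg e1, if_neg e2, if_neg h1, if_neg h2]
        ring
  rw [hquad, Finset.sum_add_distrib]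
  have hs1 : ∑ β : Fin (m-1),
      (if (β : ℕ) = i then ((w:ℤ) - (x j0 : ℤ)) * (x (π ⟨i+1, hi⟩) : ℤ) else 0)
      = ((w:ℤ) - (x j0 : ℤ)) * (x (π ⟨i+1, hi⟩) : ℤ) := by
    rw [Finset.sum_eq_single (⟨i, by omega⟩ : Fin (m-1))]
    · simp
    · intro b _ hb
      rw [if_neg (by simpa [Fin.ext_iff] using hb)]
    · simp
  have hs2 : ∑ β : Fin (m-1),
      (if (β : ℕ) + 1 = i then (x (π (Fin.castLE (Nat.sub_le m 1) β)) : ℤ) * ((w:ℤ) - (x j0 : ℤ)) else 0)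
      = (if h : 0 < i then (x (π ⟨i-1, by omega⟩) : ℤ) else 0) * ((w:ℤ) - (x j0 : ℤ)) := by
    by_cases h : 0 < i
    · rw [dif_pos h, Finset.sum_eq_single (⟨i-1, by omega⟩ : Fin (m-1))]
      · rw [if_pos (by simp; omega)]
        congr 2
      · intro b _ hb
        rw [if_neg (by simp [Fin.ext_iff] at hb ⊢; omega)]
      · simp
    · rw [dif_neg h]
      rw [Finset.sum_eq_zero, zero_mul]
      intro b _
      rw [if_neg (by omega)]
  rw [hs1, hs2]
  have hlin : ∑ β : Fin m, (((cf β).val : ℤ) * (Function.update x j0 w β : ℤ)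
      - ((cf β).val : ℤ) * (x β : ℤ))
      = ((cf j0).val : ℤ) * ((w:ℤ) - (x j0 : ℤ)) := by
    rw [Finset.sum_eq_single j0]
    · rw [hupd, if_pos rfl]; ring
    · intro b _ hb
      rw [hupd, if_neg hb]; ring
    · simp
  rw [hlin]
  ring

/-- for digit vectors `γ, δ` agreeing at positions `π(1),…,π(v-1)`,
and `γ^k, δ^k` obtained by subtracting `k` (mod `p`) at position `π(v-1)`,
`f(γ^k) - f(δ^k) - (f(γ) - f(δ)) ≡ (λ/p)·k·(δ_{π(v)} - γ_{π(v)}) (mod λ)`. -/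
theorem statement4 (p : ℕ) (hp : p.Prime) (m : ℕ) (hm : 0 < m) (q : ℕ) (hq : 0 < q)
    (π : Equiv.Perm (Fin m)) (cf : Fin m → ZMod (Nat.lcm p q))
    (v : ℕ) (hv2 : 2 ≤ v) (hvm : v ≤ m)
    (γ δ : Fin m → ℕ) (hγ : ∀ j, γ j < p) (hδ : ∀ j, δ j < p)
    (heq : ∀ j : Fin m, (j : ℕ) < v - 1 → γ (π j) = δ (π j))
    (k : ℕ) (hk1 : 1 ≤ k) (hkp : k < p) :
    fQuad p m (Nat.lcm p q) π cf
        (Function.update γ (π ⟨v - 2, by omega⟩)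
          ((γ (π ⟨v - 2, by omega⟩) + (p - k)) % p))
      - fQuad p m (Nat.lcm p q) π cf
        (Function.update δ (π ⟨v - 2, by omega⟩)
          ((δ (π ⟨v - 2, by omega⟩) + (p - k)) % p))
      - (fQuad p m (Nat.lcm p q) π cf γ - fQuad p m (Nat.lcm p q) π cf δ)
      ≡ ((Nat.lcm p q / p : ℕ) : ℤ) * (k : ℤ) *
          ((δ (π ⟨v - 1, by omega⟩) : ℤ) - (γ (π ⟨v - 1, by omega⟩) : ℤ))
        [ZMOD ((Nat.lcm p q : ℕ) : ℤ)] := by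
  have hi : (v - 2) + 1 < m := by omega
  have hv2m : v - 2 < m := by omega
  have hv1m : v - 1 < m := by omega
  have hv21 : v - 2 < v - 1 := by omega
  have hv211 : v - 2 - 1 < m := by omega
  have hv2111 : v - 2 - 1 < v - 1 := by omega
  have hsum : (v - 2) + 1 = v - 1 := by omega
  have hgd : γ (π ⟨v - 2, hv2m⟩) = δ (π ⟨v - 2, hv2m⟩) :=
    heq ⟨v - 2, hv2m⟩ hv21
  have h1 := fQuad_update_diff p m (Nat.lcm p q) π cf γ (v - 2) hi
      ((γ (π ⟨v - 2, hv2m⟩) + (p - k)) % p)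
  have h2 := fQuad_update_diff p m (Nat.lcm p q) π cf δ (v - 2) hi
      ((δ (π ⟨v - 2, hv2m⟩) + (p - k)) % p)
  have hP : (if h : 0 < v - 2 then (γ (π ⟨v - 2 - 1, hv211⟩) : ℤ) else 0)
      = (if h : 0 < v - 2 then (δ (π ⟨v - 2 - 1, hv211⟩) : ℤ) else 0) := by
    split
    · exact_mod_cast heq ⟨v - 2 - 1, hv211⟩ hv2111
    · rfl
  rw [hgd, hP] at h1
  rw [hgd]
  have hE : fQuad p m (Nat.lcm p q) π cf
        (Function.update γ (π ⟨v - 2, hv2m⟩)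
          ((δ (π ⟨v - 2, hv2m⟩) + (p - k)) % p))
      - fQuad p m (Nat.lcm p q) π cf
        (Function.update δ (π ⟨v - 2, hv2m⟩)
          ((δ (π ⟨v - 2, hv2m⟩) + (p - k)) % p))
      - (fQuad p m (Nat.lcm p q) π cf γ - fQuad p m (Nat.lcm p q) π cf δ)
      = ((Nat.lcm p q / p : ℕ) : ℤ) *
          ((((δ (π ⟨v - 2, hv2m⟩) + (p - k)) % p : ℕ) : ℤ)
              - (δ (π ⟨v - 2, hv2m⟩) : ℤ)) *
          ((γ (π ⟨(v - 2) + 1, hi⟩) : ℤ) - (δ (π ⟨(v - 2) + 1, hi⟩) : ℤ)) := by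
    linear_combination h1 - h2
  have hfin : (⟨(v - 2) + 1, hi⟩ : Fin m) = ⟨v - 1, hv1m⟩ := Fin.mk_eq_mk.mpr hsum
  have hbg : (γ (π ⟨v - 1, hv1m⟩) : ℤ) = (γ (π ⟨(v - 2) + 1, hi⟩) : ℤ) := by rw [hfin]
  have hbd : (δ (π ⟨v - 1, hv1m⟩) : ℤ) = (δ (π ⟨(v - 2) + 1, hi⟩) : ℤ) := by rw [hfin]
  obtain ⟨c, hc⟩ : (p : ℤ) ∣ ((((δ (π ⟨v - 2, hv2m⟩) + (p - k)) % p : ℕ) : ℤ)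
      - (δ (π ⟨v - 2, hv2m⟩) : ℤ) + (k : ℤ)) := by
    have hcast : ((((δ (π ⟨v - 2, hv2m⟩) + (p - k)) % p : ℕ)) : ℤ)
        = ((δ (π ⟨v - 2, hv2m⟩) : ℤ) + ((p : ℤ) - (k : ℤ))) % p := by
      push_cast [Nat.cast_sub hkp.le]
      ring_nf
    rw [hcast]
    have h0 : ((δ (π ⟨v - 2, hv2m⟩) : ℤ) + ((p : ℤ) - (k : ℤ))) % p
        ≡ (δ (π ⟨v - 2, hv2m⟩) : ℤ) + ((p : ℤ) - (k : ℤ)) [ZMOD (p : ℤ)] :=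
      Int.emod_emod_of_dvd _ dvd_rfl
    have h3 := (h0.sub_right (δ (π ⟨v - 2, hv2m⟩) : ℤ)).add_right (k : ℤ)
    have h4 : ((δ (π ⟨v - 2, hv2m⟩) : ℤ) + ((p : ℤ) - (k : ℤ))
        - (δ (π ⟨v - 2, hv2m⟩) : ℤ) + (k : ℤ)) = (p : ℤ) := by ring
    rw [h4] at h3
    exact (Int.modEq_zero_iff_dvd.mp (h3.trans (Int.modEq_zero_iff_dvd.mpr dvd_rfl)))
  have hLp : ((Nat.lcm p q / p : ℕ) : ℤ) * (p : ℤ) = ((Nat.lcm p q : ℕ) : ℤ) := by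
    exact_mod_cast congrArg (Nat.cast : ℕ → ℤ) (Nat.div_mul_cancel (Nat.dvd_lcm_left p q))
  rw [Int.modEq_iff_dvd]
  refine ⟨((δ (π ⟨v - 1, hv1m⟩) : ℤ) - (γ (π ⟨v - 1, hv1m⟩) : ℤ)) * c, ?_⟩
  linear_combination (-1 : ℤ) * hE
    + (((Nat.lcm p q / p : ℕ) : ℤ) *
        ((((δ (π ⟨v - 2, hv2m⟩) + (p - k)) % p : ℕ) : ℤ)
          - (δ (π ⟨v - 2, hv2m⟩) : ℤ))) * hbg
    - (((Nat.lcm p q / p : ℕ) : ℤ) *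
        ((((δ (π ⟨v - 2, hv2m⟩) + (p - k)) % p : ℕ) : ℤ)
          - (δ (π ⟨v - 2, hv2m⟩) : ℤ))) * hbd
    + (((δ (π ⟨v - 1, hv1m⟩) : ℤ) - (γ (π ⟨v - 1, hv1m⟩) : ℤ)) *
        ((Nat.lcm p q / p : ℕ) : ℤ)) * hc
    + (((δ (π ⟨v - 1, hv1m⟩) : ℤ) - (γ (π ⟨v - 1, hv1m⟩) : ℤ)) * c) * hLp
end
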